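/- arXiv:1506.07124 — 6 statements merged into one kernel-verified Lean document; each statement's English description precedes it below -/
import Mathlib

section
/- Let P be an n×ℓ joint probability matrix (nonnegative entries summing to 1) whose first column p₁ equals λ·p₂ for some λ ≥ 0, where p₂ is the second column. Then P is conditionally equivalent to the n×(ℓ−1) matrix P' = [(1+λ)p₂, p₃, ..., p_ℓ]; that is, each can be obtained from the other by a transformation of the form Q = Σ_j D⁽ʲ⁾ P R⁽ʲ⁾ with each D⁽ʲ⁾ doubly stochastic n×n and R⁽ʲ⁾ entrywise nonnegative with Σ_j R⁽ʲ⁾ row-stochastic. -/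
open Matrix Finset

/-- Row-stochastic matrix: nonnegative entries, each row sums to 1. -/
def RowStoch {ℓ m : ℕ} (T : Matrix (Fin ℓ) (Fin m) ℝ) : Prop :=
  (∀ y w, 0 ≤ T y w) ∧ ∀ y, ∑ w, T y w = 1

/-- Doubly stochastic matrix. -/
def DStoch {n : ℕ} (D : Matrix (Fin n) (Fin n) ℝ) : Prop :=
  (∀ i j, 0 ≤ D i j) ∧ (∀ i, ∑ j, D i j = 1) ∧ (∀ j, ∑ i, D i j = 1)

/-- Conditional majorization `P ≻_c Q` via classical-conditioned random relabelings:
`Q = ∑ j, D j * P * R j` with each `D j` doubly stochastic, each `R j` entrywise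
nonnegative, and `∑ j, R j` row-stochastic. -/
def CondMaj {n ℓ m : ℕ} (P : Matrix (Fin n) (Fin ℓ) ℝ)
    (Q : Matrix (Fin n) (Fin m) ℝ) : Prop :=
  ∃ (J : ℕ) (D : Fin J → Matrix (Fin n) (Fin n) ℝ)
    (R : Fin J → Matrix (Fin ℓ) (Fin m) ℝ),
    (∀ j, DStoch (D j)) ∧ (∀ j y w, 0 ≤ R j y w) ∧
    RowStoch (∑ j, R j) ∧ Q = ∑ j, D j * P * R j

/-- Joint probability matrix: nonnegative entries summing to one. -/
def JointProb {n ℓ : ℕ} (P : Matrix (Fin n) (Fin ℓ) ℝ) : Prop :=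
  (∀ x y, 0 ≤ P x y) ∧ ∑ x, ∑ y, P x y = 1

/-- Column sum (marginal). -/
noncomputable def ColSum {n m : ℕ} (Q : Matrix (Fin n) (Fin m) ℝ) (w : Fin m) : ℝ :=
  ∑ x, Q x w

lemma dstoch_one {n : ℕ} : DStoch (1 : Matrix (Fin n) (Fin n) ℝ) := by
  refine ⟨fun i j => ?_, fun i => ?_, fun j => ?_⟩
  · rw [Matrix.one_apply]; split <;> norm_num
  · simp [Matrix.one_apply]
  · simp [Matrix.one_apply]

lemma condMaj_single {n ℓ m : ℕ} (P : Matrix (Fin n) (Fin ℓ) ℝ)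
    (Q : Matrix (Fin n) (Fin m) ℝ) (R : Matrix (Fin ℓ) (Fin m) ℝ)
    (h1 : ∀ y w, 0 ≤ R y w) (h2 : ∀ y, ∑ w, R y w = 1) (h : Q = P * R) :
    CondMaj P Q := by
  refine ⟨1, fun _ => 1, fun _ => R, fun _ => dstoch_one, fun _ => h1, ?_, ?_⟩
  · simpa [RowStoch] using ⟨h1, h2⟩
  · simp [h]

/-- merge matrix -/
noncomputable def Rmerge (ℓ : ℕ) : Matrix (Fin (ℓ+2)) (Fin (ℓ+1)) ℝ :=
  Matrix.of fun y =>
    Fin.cases (fun w => if w = 0 then (1:ℝ) else 0)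
      (fun y' w => if w = y' then (1:ℝ) else 0) y

noncomputable def Ssplit (ℓ : ℕ) (lam : ℝ) : Matrix (Fin (ℓ+1)) (Fin (ℓ+2)) ℝ :=
  Matrix.of fun y =>
    Fin.cases (fun w => if w = 0 then lam/(1+lam) else if w = 1 then 1/(1+lam) else 0)
      (fun y' w => if w = y'.succ.succ then (1:ℝ) else 0) y

theorem stmt0 {n ℓ : ℕ} (P : Matrix (Fin n) (Fin (ℓ + 2)) ℝ)
    (P' : Matrix (Fin n) (Fin (ℓ + 1)) ℝ) (lam : ℝ)
    (hP : JointProb P) (hlam : 0 ≤ lam)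
    (hcol : ∀ x, P x 0 = lam * P x 1)
    (hP' : P' = Matrix.of fun x (w : Fin (ℓ + 1)) =>
      if w = 0 then (1 + lam) * P x 1 else P x w.succ) :
    CondMaj P P' ∧ CondMaj P' P := by
  have hpos : (0:ℝ) < 1 + lam := by linarith
  have hne : (1:ℝ) + lam ≠ 0 := ne_of_gt hpos
  constructor
  · apply condMaj_single P P' (Rmerge ℓ)
    · intro y w
      induction y using Fin.cases <;> simp [Rmerge] <;> split <;> norm_num
    · intro y
      induction y using Fin.cases <;> simp [Rmerge]
    · ext x w
      rw [hP']
      simp only [Matrix.of_apply, Matrix.mul_apply, Rmerge]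
      rw [Fin.sum_univ_succ]
      simp only [Fin.cases_zero, Fin.cases_succ]
      have key : ∑ y' : Fin (ℓ+1), P x y'.succ * (if w = y' then (1:ℝ) else 0)
          = P x w.succ := by
        have e : ∀ y' : Fin (ℓ+1), P x y'.succ * (if w = y' then (1:ℝ) else 0)
            = if w = y' then P x y'.succ else 0 := by
          intro y'; split <;> simp
        rw [Finset.sum_congr rfl fun y' _ => e y', Finset.sum_ite_eq]
        simp
      rw [key]
      by_cases hw : w = 0
      · subst hw
        rw [if_pos rfl, if_pos rfl, hcol x]
        have : ((0:Fin (ℓ+1)).succ : Fin (ℓ+2)) = 1 := rfl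
        rw [this]; ring
      · rw [if_neg hw, if_neg hw]; ring
  · apply condMaj_single P' P (Ssplit ℓ lam)
    · intro y w
      induction y using Fin.cases <;> simp [Ssplit] <;> split
      · positivity
      · split
        · positivity
        · norm_num
      · norm_num
      · norm_num
    · intro y
      induction y using Fin.cases with
      | zero =>
        simp only [Ssplit, Matrix.of_apply, Fin.cases_zero]
        rw [Fin.sum_univ_succ, Fin.sum_univ_succ]
        have h1 : ((0:Fin (ℓ+1)).succ : Fin (ℓ+2)) = 1 := rfl
        have : ∀ k : Fin ℓ, (if (k.succ.succ : Fin (ℓ+2)) = 0 then lam/(1+lam)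
            else if (k.succ.succ : Fin (ℓ+2)) = 1 then 1/(1+lam) else (0:ℝ)) = 0 := by
          intro k
          rw [if_neg (Fin.succ_ne_zero _), if_neg]
          intro h
          have := congrArg Fin.val h
          simp [Fin.ext_iff] at this
        rw [Finset.sum_congr rfl fun k _ => this k]
        rw [if_pos rfl, h1, if_neg (by intro h; exact one_ne_zero (congrArg Fin.val h) : ¬((1:Fin (ℓ+2)) = 0)), if_pos rfl]
        simp
        field_simp
        ring
      | succ y' =>
        simp [Ssplit]
    · ext x w
      rw [hP']
      simp only [Matrix.of_apply, Matrix.mul_apply, Ssplit]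
      rw [Fin.sum_univ_succ]
      simp only [Fin.cases_zero, Fin.cases_succ, if_pos rfl]
      have hsz : ∀ y' : Fin ℓ, ((y'.succ : Fin (ℓ+1)) = 0) = False := by
        intro y'; simp [Fin.succ_ne_zero]
      simp only [hsz, if_false]
      induction w using Fin.cases with
      | zero =>
        rw [if_pos rfl]
        have hz : ∀ y' : Fin ℓ, P x (y'.succ).succ *
            (if (0:Fin (ℓ+2)) = y'.succ.succ then (1:ℝ) else 0) = 0 := by
          intro y'
          rw [if_neg (Ne.symm (Fin.succ_ne_zero y'.succ)), mul_zero]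
        rw [Finset.sum_congr rfl fun y' _ => hz y', Finset.sum_const_zero, add_zero, hcol x]
        field_simp
        rw [if_pos trivial]
        ring
      | succ u =>
        induction u using Fin.cases with
        | zero =>
          have h1 : (Fin.succ (0:Fin (ℓ+1)) : Fin (ℓ+2)) = 1 := rfl
          rw [h1, if_neg (show ¬((1:Fin (ℓ+2)) = 0) by
            intro h; exact one_ne_zero (congrArg Fin.val h)), if_pos rfl]
          have hz : ∀ y' : Fin ℓ, P x (y'.succ).succ *
              (if (1:Fin (ℓ+2)) = y'.succ.succ then (1:ℝ) else 0) = 0 := by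
            intro y'
            rw [if_neg, mul_zero]
            intro h
            have := congrArg Fin.val h
            simp [Fin.ext_iff] at this
          rw [Finset.sum_congr rfl fun y' _ => hz y', Finset.sum_const_zero, add_zero,
            if_pos trivial]
          field_simp
        | succ u' =>
          rw [if_neg (Fin.succ_ne_zero (Fin.succ u')),
            if_neg (show ¬((Fin.succ (Fin.succ u') : Fin (ℓ+2)) = 1) by
              intro h; have := congrArg Fin.val h; simp [Fin.val_succ] at this)]
          have key : ∀ y' : Fin ℓ, P x (y'.succ).succ *
              (if (Fin.succ (Fin.succ u') : Fin (ℓ+2)) = y'.succ.succ then (1:ℝ) else 0)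
              = if y' = u' then P x (y'.succ).succ else 0 := by
            intro y'
            by_cases h : y' = u'
            · subst h; rw [if_pos rfl, if_pos rfl, mul_one]
            · rw [if_neg, mul_zero, if_neg h]
              intro hh
              exact h (Fin.succ_injective _ (Fin.succ_injective _ hh)).symm
          rw [Finset.sum_congr rfl fun y' _ => key y',
            Finset.sum_ite_eq' Finset.univ u' (fun y' => P x (y'.succ).succ)]
          simp
end

section
/- For an n×ℓ nonnegative matrix P and n×m nonnegative matrix Q, Q ≺_c P (i.e., Q = Σ_j D⁽ʲ⁾ P R⁽ʲ⁾ for doubly stochastic D⁽ʲ⁾ and nonnegative R⁽ʲ⁾ with Σ_j R⁽ʲ⁾ row-stochastic) if and only if there exist m doubly stochastic n×n matrices D⁽ʷ⁾ (w = 1,...,m) and an ℓ×m row-stochastic matrix T = [t_{yw}] such that each column of Q satisfies q_w = Σ_{y=1}^ℓ t_{yw} D^{(y,w)} p_y, where p_y are the columns of P. -/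
open Matrix Finset

theorem stmt1 {n ℓ m : ℕ} (P : Matrix (Fin n) (Fin ℓ) ℝ) (Q : Matrix (Fin n) (Fin m) ℝ)
    (hP : ∀ x y, 0 ≤ P x y) (hQ : ∀ x w, 0 ≤ Q x w) :
    CondMaj P Q ↔
      ∃ (D : Fin ℓ → Fin m → Matrix (Fin n) (Fin n) ℝ) (T : Matrix (Fin ℓ) (Fin m) ℝ),
        (∀ y w, DStoch (D y w)) ∧ RowStoch T ∧
        ∀ w x, Q x w = ∑ y, T y w * ∑ x', (D y w) x x' * P x' y := by
  constructor
  · rintro ⟨J, D, R, hD, hR, hRS, hQeq⟩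
    set T : Matrix (Fin ℓ) (Fin m) ℝ := ∑ j, R j with hT
    have hTapp : ∀ y w, T y w = ∑ j, R j y w := by
      intro y w; rw [hT, Matrix.sum_apply]
    have hTnn : ∀ y w, 0 ≤ T y w := fun y w => by
      rw [hTapp]; exact Finset.sum_nonneg fun j _ => hR j y w
    refine ⟨fun y w => if 0 < T y w then ∑ j, (R j y w / T y w) • D j else 1, T, ?_, hRS, ?_⟩
    · intro y w
      by_cases h : 0 < T y w
      · simp only [if_pos h]
        refine ⟨fun i k => ?_, fun i => ?_, fun k => ?_⟩
        · rw [Matrix.sum_apply]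
          exact Finset.sum_nonneg fun j _ =>
            mul_nonneg (div_nonneg (hR j y w) h.le) ((hD j).1 i k)
        · simp only [Matrix.sum_apply, Matrix.smul_apply, smul_eq_mul]
          rw [Finset.sum_comm]
          have h1 : ∀ j : Fin J, ∑ k, R j y w / T y w * D j i k = R j y w / T y w := by
            intro j; rw [← Finset.mul_sum, (hD j).2.1, mul_one]
          rw [Finset.sum_congr rfl fun j _ => h1 j, ← Finset.sum_div, ← hTapp,
            div_self h.ne']
        · simp only [Matrix.sum_apply, Matrix.smul_apply, smul_eq_mul]
          rw [Finset.sum_comm]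
          have h1 : ∀ j : Fin J, ∑ i, R j y w / T y w * D j i k = R j y w / T y w := by
            intro j; rw [← Finset.mul_sum, (hD j).2.2, mul_one]
          rw [Finset.sum_congr rfl fun j _ => h1 j, ← Finset.sum_div, ← hTapp,
            div_self h.ne']
      · simp only [if_neg h]; exact dstoch_one
    · intro w x
      have hQxw : Q x w = ∑ y, ∑ j, R j y w * ∑ x', D j x x' * P x' y := by
        rw [hQeq, Matrix.sum_apply]
        simp only [Matrix.mul_apply]
        rw [Finset.sum_comm]
        exact Finset.sum_congr rfl fun y _ => Finset.sum_congr rfl fun j _ => mul_comm _ _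
      rw [hQxw]
      refine Finset.sum_congr rfl fun y _ => ?_
      by_cases h : 0 < T y w
      · simp only [if_pos h, Matrix.sum_apply, Matrix.smul_apply, smul_eq_mul,
          Finset.sum_mul]
        rw [Finset.sum_comm (γ := Fin n), Finset.mul_sum]
        refine Finset.sum_congr rfl fun j _ => ?_
        rw [Finset.mul_sum, Finset.mul_sum]
        refine Finset.sum_congr rfl fun x' _ => ?_
        have hne : T y w ≠ 0 := h.ne'
        field_simp
      · have h0 : T y w = 0 := le_antisymm (not_lt.mp h) (hTnn y w)
        have hR0 : ∀ j : Fin J, R j y w = 0 := by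
          intro j
          have := (Finset.sum_eq_zero_iff_of_nonneg
            (fun j _ => hR j y w)).mp ((hTapp y w).symm.trans h0)
          exact this j (Finset.mem_univ j)
        simp [h0, hR0]
  · rintro ⟨D, T, hD, hT, hEq⟩
    refine ⟨ℓ * m, fun j => D (finProdFinEquiv.symm j).1 (finProdFinEquiv.symm j).2,
      fun j => Matrix.of fun y w => if (y, w) = finProdFinEquiv.symm j then T y w else 0,
      fun j => hD _ _, fun j y w => ?_, ?_, ?_⟩
    · dsimp only [Matrix.of_apply]
      split
      · exact hT.1 y w
      · exact le_refl 0
    · have hsum : (∑ j : Fin (ℓ * m), Matrix.of fun y w =>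
          if (y, w) = finProdFinEquiv.symm j then T y w else (0:ℝ)) = T := by
        ext y w
        rw [Matrix.sum_apply]
        simp only [Matrix.of_apply, Equiv.eq_symm_apply]
        simp [Finset.sum_ite_eq]
      rw [hsum]; exact hT
    · ext x w
      rw [Matrix.sum_apply]
      rw [← Equiv.sum_comp finProdFinEquiv
        (fun j => (D (finProdFinEquiv.symm j).1 (finProdFinEquiv.symm j).2 * P *
          Matrix.of fun y w =>
            if (y, w) = finProdFinEquiv.symm j then T y w else (0:ℝ)) x w)]
      simp only [Equiv.symm_apply_apply]
      rw [Fintype.sum_prod_type]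
      rw [hEq w x]
      refine Finset.sum_congr rfl fun y0 _ => ?_
      simp only [Matrix.mul_apply, Matrix.of_apply, Prod.mk.injEq]
      simp only [mul_ite, mul_zero, ite_and]
      rw [Finset.sum_comm]
      simp [Finset.sum_ite_eq, Finset.sum_ite_eq', mul_comm]
end

section
/- Let P (n×ℓ) and Q (n×m) be joint probability matrices with each column arranged in nonincreasing order. Then P ≻_c Q if and only if there exists an ℓ×m row-stochastic matrix T with LPT ≥ LQ entrywise, where L is the n×n lower-triangular matrix of all ones on and below the diagonal. -/
open Matrix Finset

/-- The lower-triangular matrix of ones on and below the diagonal. -/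
noncomputable def Lmat (n : ℕ) : Matrix (Fin n) (Fin n) ℝ :=
  Matrix.of fun i j => if j ≤ i then (1 : ℝ) else 0

lemma abel_aux (a d : ℕ → ℝ) :
    ∀ (N : ℕ) (c : ℝ), (∀ i j, i ≤ j → j < N → a j ≤ a i) → (∀ i, i < N → c ≤ a i) →
      (∀ k, k ≤ N → 0 ≤ ∑ i ∈ Finset.range k, d i) →
      c * ∑ i ∈ Finset.range N, d i ≤ ∑ i ∈ Finset.range N, a i * d i := by
  intro N
  induction N with
  | zero => intro c _ _ _; simp
  | succ N ih =>
    intro c ha hc hd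
    have h1 : a N * ∑ i ∈ Finset.range N, d i ≤ ∑ i ∈ Finset.range N, a i * d i :=
      ih (a N) (fun i j hij hj => ha i j hij (Nat.lt_succ_of_lt hj))
        (fun i hi => ha i N (Nat.le_of_lt hi) (Nat.lt_succ_self N))
        (fun k hk => hd k (Nat.le_succ_of_le hk))
    have h2 : 0 ≤ ∑ i ∈ Finset.range (N + 1), d i := hd _ le_rfl
    have h3 : c ≤ a N := hc N (Nat.lt_succ_self N)
    rw [Finset.sum_range_succ] at h2 ⊢
    rw [Finset.sum_range_succ (fun i => a i * d i)]
    nlinarith [mul_le_mul_of_nonneg_right h3 h2]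

lemma abel_fin {n : ℕ} (a x y : Fin n → ℝ) (ha : ∀ i j : Fin n, i ≤ j → a j ≤ a i)
    (hps : ∀ k : Fin n, ∑ i, (if i ≤ k then x i else 0) ≤ ∑ i, (if i ≤ k then y i else 0))
    (hsum : ∑ i, x i = ∑ i, y i) :
    ∑ i, a i * x i ≤ ∑ i, a i * y i := by
  rcases Nat.eq_zero_or_pos n with hn | hn
  · subst hn; simp
  set a' : ℕ → ℝ := fun i => if h : i < n then a ⟨i, h⟩ else 0 with ha'
  set x' : ℕ → ℝ := fun i => if h : i < n then x ⟨i, h⟩ else 0 with hx'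
  set y' : ℕ → ℝ := fun i => if h : i < n then y ⟨i, h⟩ else 0 with hy'
  have key : ∀ (z : Fin n → ℝ) (z' : ℕ → ℝ), (z' = fun i => if h : i < n then z ⟨i, h⟩ else 0) →
      ∀ (j : ℕ) (hj : j < n),
      ∑ i, (if i ≤ (⟨j, hj⟩ : Fin n) then z i else 0) = ∑ i ∈ Finset.range (j + 1), z' i := by
    intro z z' hz' j hj
    have h1 : ∑ i, (if i ≤ (⟨j, hj⟩ : Fin n) then z i else 0)
        = ∑ i ∈ Finset.range n, (if i ≤ j then z' i else 0) := by
      rw [← Fin.sum_univ_eq_sum_range (fun i => if i ≤ j then z' i else 0) n]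
      refine Finset.sum_congr rfl fun i _ => ?_
      have : (i ≤ (⟨j, hj⟩ : Fin n)) ↔ ((i : ℕ) ≤ j) := Iff.rfl
      rw [hz']
      simp [this, i.isLt]
    rw [h1]
    rw [← Finset.sum_subset (Finset.range_subset_range.2 hj) (f := fun i => if i ≤ j then z' i else 0)
      (fun t _ ht => by
        simp only [Finset.mem_range, Nat.lt_succ_iff, not_le] at ht
        simp [Nat.not_le.2 ht, if_neg])]
    refine Finset.sum_congr rfl fun t ht => ?_
    simp only [Finset.mem_range, Nat.lt_succ_iff] at ht
    simp [ht]
  have htotz : ∀ (z : Fin n → ℝ) (z' : ℕ → ℝ),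
      (z' = fun i => if h : i < n then z ⟨i, h⟩ else 0) →
      ∑ i ∈ Finset.range n, z' i = ∑ i, z i := by
    intro z z' hz'
    rw [← Fin.sum_univ_eq_sum_range z' n]
    exact Finset.sum_congr rfl fun i _ => by rw [hz']; simp [i.isLt]
  have hd : ∀ k, k ≤ n → 0 ≤ ∑ i ∈ Finset.range k, (y' i - x' i) := by
    intro k hk
    rcases Nat.eq_zero_or_pos k with h0 | h0
    · subst h0; simp
    obtain ⟨j, rfl⟩ := Nat.exists_eq_succ_of_ne_zero (Nat.pos_iff_ne_zero.1 h0)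
    have hj : j < n := hk
    rw [Finset.sum_sub_distrib]
    have := hps ⟨j, hj⟩
    rw [key x x' hx' j hj, key y y' hy' j hj] at this
    linarith
  have habel := abel_aux a' (fun i => y' i - x' i) n (a' (n - 1))
    (fun i j hij hj => by
      simp only [ha', dif_pos hj, dif_pos (lt_of_le_of_lt hij hj)]
      exact ha ⟨i, _⟩ ⟨j, _⟩ hij)
    (fun i hi => by
      have hn1 : n - 1 < n := Nat.sub_lt hn Nat.one_pos
      simp only [ha', dif_pos hi, dif_pos hn1]
      exact ha ⟨i, hi⟩ ⟨n - 1, hn1⟩ (Nat.le_sub_one_of_lt hi))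
    hd
  have hzero : ∑ i ∈ Finset.range n, (y' i - x' i) = 0 := by
    rw [Finset.sum_sub_distrib, htotz x x' hx', htotz y y' hy']
    linarith [hsum]
  rw [hzero, mul_zero] at habel
  have hfin : ∑ i ∈ Finset.range n, a' i * (y' i - x' i)
      = ∑ i, a i * y i - ∑ i, a i * x i := by
    have e1 := htotz (fun i => a i * y i) (fun i => a' i * y' i) (by
      funext i; by_cases h : i < n <;> simp [ha', hy', h])
    have e2 := htotz (fun i => a i * x i) (fun i => a' i * x' i) (by
      funext i; by_cases h : i < n <;> simp [ha', hx', h])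
    rw [← e1, ← e2, ← Finset.sum_sub_distrib]
    refine Finset.sum_congr rfl fun i _ => by ring
  rw [hfin] at habel
  linarith

lemma chop {n : ℕ} (v c : Fin n → ℝ) (k : Fin n) (hv : ∀ i j : Fin n, i ≤ j → v j ≤ v i)
    (hc0 : ∀ x, 0 ≤ c x) (hc1 : ∀ x, c x ≤ 1)
    (hcs : ∑ x, c x = ∑ x, (if x ≤ k then (1 : ℝ) else 0)) :
    ∑ x, c x * v x ≤ ∑ x, (if x ≤ k then v x else 0) := by
  have key : ∀ x, c x * v x - (if x ≤ k then v x else 0)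
      ≤ (c x - (if x ≤ k then (1 : ℝ) else 0)) * v k := by
    intro x
    by_cases h : x ≤ k
    · have h1 : v k ≤ v x := hv x k h
      have h2 : c x - 1 ≤ 0 := by linarith [hc1 x]
      simp only [if_pos h]
      nlinarith
    · have h1 : v x ≤ v k := hv k x (le_of_not_ge h)
      simp only [if_neg h]
      nlinarith [hc0 x]
  have := Finset.sum_le_sum (fun x (_ : x ∈ Finset.univ) => key x)
  rw [Finset.sum_sub_distrib] at this
  have h2 : ∑ i : Fin n, (c i - if i ≤ k then (1 : ℝ) else 0) * v k = 0 := by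
    rw [← Finset.sum_mul, Finset.sum_sub_distrib, hcs]; ring
  linarith

lemma permMatrix_mulVec' {n : ℕ} (σ : Equiv.Perm (Fin n)) (y : Fin n → ℝ) :
    σ.permMatrix ℝ *ᵥ y = y ∘ σ := by
  ext i
  simp [Matrix.mulVec, dotProduct, Equiv.Perm.permMatrix, PEquiv.toMatrix_apply,
    Equiv.toPEquiv_apply]

lemma hlp {n : ℕ} (x y : Fin n → ℝ)
    (hx : ∀ i j : Fin n, i ≤ j → x j ≤ x i)
    (hps : ∀ k : Fin n, ∑ i, (if i ≤ k then x i else 0) ≤ ∑ i, (if i ≤ k then y i else 0))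
    (hsum : ∑ i, x i = ∑ i, y i) :
    ∃ D : Matrix (Fin n) (Fin n) ℝ, DStoch D ∧ ∀ i, x i = ∑ j, D i j * y j := by
  classical
  set g : Equiv.Perm (Fin n) → (Fin n → ℝ) := fun σ => y ∘ σ with hg
  have hxmem : x ∈ convexHull ℝ (Set.range g) := by
    by_contra hcon
    have hfin : (Set.range g).Finite := Set.finite_range g
    obtain ⟨f, u, hfu, hux⟩ := geometric_hahn_banach_closed_point
      (convex_convexHull ℝ _) (hfin.isClosed_convexHull (𝕜 := ℝ)) hcon
    set c : Fin n → ℝ := fun i => f (Pi.single i 1) with hc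
    have hf_eq : ∀ a : Fin n → ℝ, f a = ∑ i, c i * a i := by
      intro a
      have ha : a = ∑ i, a i • (Pi.single i (1 : ℝ) : Fin n → ℝ) := by
        ext j
        simp [Pi.single_apply]
      conv_lhs => rw [ha]
      rw [map_sum]
      refine Finset.sum_congr rfl fun i _ => ?_
      rw [f.map_smul]
      simp [hc, mul_comm]
    set τ : Equiv.Perm (Fin n) := Tuple.sort (fun i => -c i) with hτ
    have hmono := Tuple.monotone_sort (fun i => -c i)
    have hca : ∀ i j : Fin n, i ≤ j → c (τ j) ≤ c (τ i) := by
      intro i j hij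
      have := hmono hij
      simp only [Function.comp_apply, neg_le_neg_iff] at this
      exact this
    have h1 : f x = ∑ k, c (τ k) * x (τ k) := by
      rw [hf_eq]
      exact (Equiv.sum_comp τ (fun i => c i * x i)).symm
    have h2 : ∑ k, c (τ k) * x (τ k) ≤ ∑ k, c (τ k) * x k := by
      have hmv : Monovary (fun k => c (τ k)) x := by
        intro i j hij
        rcases le_or_gt i j with h | h
        · exact absurd (hx i j h) (not_le.2 hij)
        · exact hca j i h.le
      exact hmv.sum_mul_comp_perm_le_sum_mul
    have h3 : ∑ k, c (τ k) * x k ≤ ∑ k, c (τ k) * y k :=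
      abel_fin (fun k => c (τ k)) x y hca hps hsum
    have h4 : ∑ k, c (τ k) * y k = f (g τ⁻¹) := by
      rw [hf_eq]
      rw [← Equiv.sum_comp τ (fun i => c i * (g τ⁻¹) i)]
      refine Finset.sum_congr rfl fun k _ => ?_
      simp [hg]
    have h5 : f (g τ⁻¹) < u := hfu _ (subset_convexHull ℝ _ ⟨τ⁻¹, rfl⟩)
    linarith [h1, h2, h3, h4.symm.le, h5, hux]
  let Φ : Matrix (Fin n) (Fin n) ℝ →ₗ[ℝ] (Fin n → ℝ) :=
    { toFun := fun D => D *ᵥ y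
      map_add' := fun A B => Matrix.add_mulVec A B y
      map_smul' := fun r A => by simp [Matrix.smul_mulVec] }
  have himg : Φ '' (doublyStochastic ℝ (Fin n) : Set _) = convexHull ℝ (Set.range g) := by
    rw [doublyStochastic_eq_convexHull_permMatrix, LinearMap.image_convexHull]
    congr 1
    ext v
    constructor
    · rintro ⟨M, ⟨σ, rfl⟩, rfl⟩
      exact ⟨σ, (permMatrix_mulVec' σ y).symm⟩
    · rintro ⟨σ, rfl⟩
      exact ⟨σ.permMatrix ℝ, ⟨σ, rfl⟩, permMatrix_mulVec' σ y⟩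
  rw [← himg] at hxmem
  obtain ⟨D, hD, hDx⟩ := hxmem
  rw [SetLike.mem_coe, mem_doublyStochastic_iff_sum] at hD
  refine ⟨D, ⟨hD.1, hD.2.1, hD.2.2⟩, fun i => ?_⟩
  rw [← hDx]
  rfl

lemma swap_mul {a b : ℕ} (c : Fin a → ℝ) (M : Matrix (Fin a) (Fin b) ℝ) (v : Fin b → ℝ) :
    ∑ i, c i * (∑ x, M i x * v x) = ∑ x, (∑ i, c i * M i x) * v x := by
  simp only [Finset.mul_sum, Finset.sum_mul, mul_assoc]
  exact Finset.sum_comm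

lemma Lmul_mul {n a b : ℕ} (B : Matrix (Fin n) (Fin a) ℝ) (S : Matrix (Fin a) (Fin b) ℝ)
    (k : Fin n) (w : Fin b) :
    (Lmat n * (B * S)) k w = ∑ y, (∑ i, (if i ≤ k then (1 : ℝ) else 0) * B i y) * S y w := by
  rw [show Lmat n * (B * S) = Lmat n * B * S from (Matrix.mul_assoc _ _ _).symm]
  rw [Matrix.mul_apply]
  refine Finset.sum_congr rfl fun y _ => ?_
  rw [Matrix.mul_apply]
  rfl

theorem stmt2 {n ℓ m : ℕ} (P : Matrix (Fin n) (Fin ℓ) ℝ) (Q : Matrix (Fin n) (Fin m) ℝ)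
    (hP : JointProb P) (hQ : JointProb Q)
    (hPs : ∀ y, ∀ x x' : Fin n, x ≤ x' → P x' y ≤ P x y)
    (hQs : ∀ w, ∀ x x' : Fin n, x ≤ x' → Q x' w ≤ Q x w) :
    CondMaj P Q ↔
      ∃ T : Matrix (Fin ℓ) (Fin m) ℝ, RowStoch T ∧
        ∀ k w, (Lmat n * Q) k w ≤ (Lmat n * P * T) k w := by
  constructor
  · rintro ⟨J, D, R, hD, hR, hT, rfl⟩
    refine ⟨∑ j, R j, hT, fun k w => ?_⟩
    calc (Lmat n * ∑ j, D j * P * R j) k w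
        = ∑ j, ∑ y, (∑ x, (∑ i, (if i ≤ k then (1 : ℝ) else 0) * D j i x) * P x y) * R j y w := by
          rw [Matrix.mul_sum, Matrix.sum_apply]
          refine Finset.sum_congr rfl fun j _ => ?_
          rw [Lmul_mul (D j * P) (R j) k w]
          refine Finset.sum_congr rfl fun y _ => ?_
          congr 1
          simp_rw [Matrix.mul_apply]
          exact swap_mul _ (D j) (fun x => P x y)
      _ ≤ ∑ j, ∑ y, (∑ x, (if x ≤ k then P x y else 0)) * R j y w := by
          refine Finset.sum_le_sum fun j _ => Finset.sum_le_sum fun y _ => ?_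
          refine mul_le_mul_of_nonneg_right ?_ (hR j y w)
          refine chop (fun x => P x y) _ k (fun i j' h => hPs y i j' h) ?_ ?_ ?_
          · intro xx
            exact Finset.sum_nonneg fun i _ =>
              mul_nonneg (by by_cases h : i ≤ k <;> simp [h]) ((hD j).1 i xx)
          · intro xx
            calc ∑ i, (if i ≤ k then (1 : ℝ) else 0) * D j i xx
                ≤ ∑ i, D j i xx := Finset.sum_le_sum fun i _ => by
                  by_cases h : i ≤ k <;> simp [h, (hD j).1 i xx]
              _ = 1 := (hD j).2.2 xx
          · rw [Finset.sum_comm]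
            simp_rw [← Finset.mul_sum, (hD j).2.1, mul_one]
      _ = (Lmat n * P * (∑ j, R j)) k w := by
          rw [Matrix.mul_assoc, Lmul_mul P (∑ j, R j) k w]
          simp_rw [Matrix.sum_apply, Finset.mul_sum]
          rw [Finset.sum_comm]
          refine Finset.sum_congr rfl fun j _ => Finset.sum_congr rfl fun y _ => ?_
          congr 1
          exact Finset.sum_congr rfl fun x _ => by by_cases h : x ≤ k <;> simp [h]
  · rintro ⟨T, hTrs, hLe⟩
    classical
    rcases Nat.eq_zero_or_pos n with hn | hn
    · exfalso
      have h2 := hP.2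
      subst hn
      simp at h2
    have hLQ : ∀ (A : Matrix (Fin n) (Fin m) ℝ) k w,
        (Lmat n * A) k w = ∑ i, (if i ≤ k then A i w else 0) := by
      intro A k w
      rw [Matrix.mul_apply]
      refine Finset.sum_congr rfl fun i _ => ?_
      simp [Lmat, ite_mul]
    have hLe' : ∀ k w, (∑ i, if i ≤ k then Q i w else 0) ≤ ∑ i, if i ≤ k then (P * T) i w else 0 := by
      intro k w
      have := hLe k w
      rw [Matrix.mul_assoc, hLQ Q, hLQ (P * T)] at this
      exact this
    set last : Fin n := ⟨n - 1, Nat.sub_lt hn Nat.one_pos⟩ with hlast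
    have hle_last : ∀ i : Fin n, i ≤ last := fun i => by
      simp only [hlast, Fin.le_def]
      exact Nat.le_sub_one_of_lt i.isLt
    have hcols : ∀ w, ∑ i, Q i w ≤ ∑ i, (P * T) i w := by
      intro w
      have h := hLe' last w
      have e1 : (∑ i, if i ≤ last then Q i w else 0) = ∑ i, Q i w :=
        Finset.sum_congr rfl fun i _ => if_pos (hle_last i)
      have e2 : (∑ i, if i ≤ last then (P * T) i w else 0) = ∑ i, (P * T) i w :=
        Finset.sum_congr rfl fun i _ => if_pos (hle_last i)
      rw [e1, e2] at h
      exact h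
    have htotQ : ∑ w, ∑ i, Q i w = 1 := by rw [Finset.sum_comm]; exact hQ.2
    have htotPT : ∑ w, ∑ i, (P * T) i w = 1 := by
      rw [Finset.sum_comm]
      simp_rw [Matrix.mul_apply]
      have hrow : ∀ i : Fin n, ∑ w, ∑ y, P i y * T y w = ∑ y, P i y := by
        intro i
        rw [Finset.sum_comm]
        simp_rw [← Finset.mul_sum, hTrs.2, mul_one]
      rw [Finset.sum_congr rfl fun i _ => hrow i]
      exact hP.2
    have hcol_eq : ∀ w, ∑ i, Q i w = ∑ i, (P * T) i w := by
      have h := (Finset.sum_eq_sum_iff_of_le (fun w _ => hcols w)).1 (htotQ.trans htotPT.symm)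
      exact fun w => h w (Finset.mem_univ w)
    have key := fun w => hlp (fun i => Q i w) (fun i => (P * T) i w)
      (fun i j h => hQs w i j h)
      (fun k => hLe' k w)
      (hcol_eq w)
    choose Dm hDm hDmx using key
    refine ⟨m, Dm, (fun w' => Matrix.of fun yy ww => if ww = w' then T yy ww else 0),
      hDm, ?_, ?_, ?_⟩
    · intro j yy w
      dsimp
      split
      · exact hTrs.1 yy w
      · exact le_rfl
    · have hTeq : (∑ w' : Fin m, (Matrix.of fun yy ww => if ww = w' then T yy ww else 0 :
          Matrix (Fin ℓ) (Fin m) ℝ)) = T := by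
        ext yy ww
        rw [Matrix.sum_apply]
        simp
      rw [hTeq]
      exact hTrs
    · ext x w
      rw [Matrix.sum_apply]
      have hterm : ∀ w' : Fin m,
          (Dm w' * P * Matrix.of fun yy ww => if ww = w' then T yy ww else 0) x w
            = if w = w' then (Dm w' * (P * T)) x w else 0 := by
        intro w'
        rw [Matrix.mul_apply]
        by_cases h : w = w'
        · simp only [Matrix.of_apply, if_pos h]
          rw [← Matrix.mul_assoc, Matrix.mul_apply]
        · simp [Matrix.of_apply, h]
      rw [Finset.sum_congr rfl fun w' _ => hterm w']
      rw [Finset.sum_ite_eq]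
      simp only [Finset.mem_univ, if_pos]
      rw [Matrix.mul_apply]
      exact hDmx w x
end

section
/- Let A be an m×m row-stochastic matrix and Q an n×m matrix with nonnegative entries, in standard form (each column sorted nonincreasingly, no column a nonnegative multiple of another, no zero columns, columns ordered as in the standard form). If Q = QA, then A is the m×m identity matrix. -/
open Matrix Finset

/-- Partial column sum of the first `k` entries of column `w`. -/
noncomputable def PartSum {n m : ℕ} (Q : Matrix (Fin n) (Fin m) ℝ) (k : ℕ) (w : Fin m) : ℝ :=
  ∑ x ∈ Finset.univ.filter (fun x : Fin n => (x : ℕ) < k), Q x w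

/-- Standard form: columns sorted nonincreasingly, no zero columns, no column a
nonnegative multiple of another, and columns ordered by nonincreasing column sums,
ties broken lexicographically by nonincreasing partial sums. -/
def StdForm {n m : ℕ} (Q : Matrix (Fin n) (Fin m) ℝ) : Prop :=
  (∀ w, ∀ x x' : Fin n, x ≤ x' → Q x' w ≤ Q x w) ∧
  (∀ w, ∃ x, Q x w ≠ 0) ∧
  (∀ w w' : Fin m, w ≠ w' → ∀ c : ℝ, 0 ≤ c → ¬ (∀ x, Q x w = c * Q x w')) ∧
  (∀ w w' : Fin m, w < w' →
    ColSum Q w' < ColSum Q w ∨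
    (ColSum Q w' = ColSum Q w ∧ ∃ k : ℕ,
      (∀ j < k, PartSum Q j w = PartSum Q j w') ∧ PartSum Q k w' < PartSum Q k w))


/-- Reachability in the positivity graph of `A`. -/
def MReach {m : ℕ} (A : Matrix (Fin m) (Fin m) ℝ) (v u : Fin m) : Prop :=
  ∃ k : ℕ, 0 < (A ^ k) v u

open Classical in
noncomputable def ReachSet {m : ℕ} (A : Matrix (Fin m) (Fin m) ℝ) (v : Fin m) :
    Finset (Fin m) :=
  Finset.univ.filter (fun u => MReach A v u)

lemma mem_reachSet {m : ℕ} {A : Matrix (Fin m) (Fin m) ℝ} {v u : Fin m} :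
    u ∈ ReachSet A v ↔ MReach A v u := by
  classical
  simp [ReachSet]

lemma mreach_refl {m : ℕ} (A : Matrix (Fin m) (Fin m) ℝ) (v : Fin m) : MReach A v v :=
  ⟨0, by rw [pow_zero, Matrix.one_apply_eq]; norm_num⟩

lemma pow_entry_nonneg {m : ℕ} (A : Matrix (Fin m) (Fin m) ℝ)
    (hA0 : ∀ v w, 0 ≤ A v w) : ∀ (k : ℕ) (v w : Fin m), 0 ≤ (A ^ k) v w := by
  intro k
  induction k with
  | zero =>
      intro v w
      rw [pow_zero, Matrix.one_apply]
      split <;> norm_num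
  | succ k ih =>
      intro v w
      rw [pow_succ, Matrix.mul_apply]
      exact Finset.sum_nonneg fun z _ => mul_nonneg (ih v z) (hA0 z w)

lemma pow_pos_extract {m : ℕ} (A : Matrix (Fin m) (Fin m) ℝ)
    (hA0 : ∀ v w, 0 ≤ A v w) {k : ℕ} {v w : Fin m}
    (h : 0 < (A ^ (k + 1)) v w) : ∃ z, 0 < (A ^ k) v z ∧ 0 < A z w := by
  by_contra hc
  push_neg at hc
  have hzero : (A ^ (k + 1)) v w = 0 := by
    rw [pow_succ, Matrix.mul_apply]
    refine Finset.sum_eq_zero fun z _ => ?_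
    rcases lt_or_eq_of_le (pow_entry_nonneg A hA0 k v z) with hz | hz
    · have h2 : A z w = 0 := le_antisymm (hc z hz) (hA0 z w)
      rw [h2, mul_zero]
    · rw [← hz, zero_mul]
  rw [hzero] at h
  exact lt_irrefl 0 h

lemma pow_pos_trans {m : ℕ} (A : Matrix (Fin m) (Fin m) ℝ)
    (hA0 : ∀ v w, 0 ≤ A v w) {k l : ℕ} {v z w : Fin m}
    (h1 : 0 < (A ^ k) v z) (h2 : 0 < (A ^ l) z w) : 0 < (A ^ (k + l)) v w := by
  rw [pow_add, Matrix.mul_apply]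
  calc (0 : ℝ) < (A ^ k) v z * (A ^ l) z w := mul_pos h1 h2
    _ ≤ ∑ u, (A ^ k) v u * (A ^ l) u w :=
        Finset.single_le_sum
          (fun u _ => mul_nonneg (pow_entry_nonneg A hA0 k v u) (pow_entry_nonneg A hA0 l u w))
          (Finset.mem_univ z)

lemma closed_pow {m : ℕ} (A : Matrix (Fin m) (Fin m) ℝ)
    (hA0 : ∀ v w, 0 ≤ A v w) (C : Finset (Fin m))
    (hC : ∀ u ∈ C, ∀ z, 0 < A u z → z ∈ C) :
    ∀ (k : ℕ), ∀ u ∈ C, ∀ z, 0 < (A ^ k) u z → z ∈ C := by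
  intro k
  induction k with
  | zero =>
      intro u hu z hz
      rcases eq_or_ne u z with rfl | hne
      · exact hu
      · rw [pow_zero, Matrix.one_apply_ne hne] at hz
        exact absurd hz (lt_irrefl 0)
  | succ k ih =>
      intro u hu z hz
      obtain ⟨z', h1, h2⟩ := pow_pos_extract A hA0 hz
      exact hC z' (ih u hu z' h1) z h2

/-- A closed set has no incoming edges, given a positive left-fixed vector `s`. -/
lemma closed_no_incoming {m : ℕ} (A : Matrix (Fin m) (Fin m) ℝ)
    (hA0 : ∀ v w, 0 ≤ A v w) (hA1 : ∀ v, ∑ w, A v w = 1)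
    (s : Fin m → ℝ) (hs : ∀ u, 0 < s u) (hfix : ∀ w, s w = ∑ u, s u * A u w)
    (C : Finset (Fin m)) (hC : ∀ u ∈ C, ∀ z, 0 < A u z → z ∈ C) :
    ∀ u, u ∉ C → ∀ w ∈ C, A u w = 0 := by
  have hrow : ∀ u ∈ C, ∑ w ∈ C, A u w = 1 := by
    intro u hu
    rw [← hA1 u]
    refine Finset.sum_subset (Finset.subset_univ C) (fun w _ hw => ?_)
    by_contra hne
    exact hw (hC u hu w (lt_of_le_of_ne (hA0 u w) (Ne.symm hne)))
  have key : ∑ w ∈ C, s w = ∑ u ∈ C, s u + ∑ u ∈ Cᶜ, s u * ∑ w ∈ C, A u w := by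
    calc ∑ w ∈ C, s w = ∑ w ∈ C, ∑ u, s u * A u w :=
          Finset.sum_congr rfl fun w _ => hfix w
      _ = ∑ u, ∑ w ∈ C, s u * A u w := Finset.sum_comm
      _ = ∑ u, s u * ∑ w ∈ C, A u w := by
          refine Finset.sum_congr rfl fun u _ => ?_
          rw [Finset.mul_sum]
      _ = ∑ u ∈ C, s u * ∑ w ∈ C, A u w + ∑ u ∈ Cᶜ, s u * ∑ w ∈ C, A u w :=
          (Finset.sum_add_sum_compl C _).symm
      _ = ∑ u ∈ C, s u + ∑ u ∈ Cᶜ, s u * ∑ w ∈ C, A u w := by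
          congr 1
          refine Finset.sum_congr rfl fun u hu => ?_
          rw [hrow u hu, mul_one]
  have hzero : ∑ u ∈ Cᶜ, s u * ∑ w ∈ C, A u w = 0 := by linarith [key]
  have heach : ∀ u ∈ Cᶜ, s u * ∑ w ∈ C, A u w = 0 :=
    (Finset.sum_eq_zero_iff_of_nonneg (fun u _ =>
      mul_nonneg (le_of_lt (hs u)) (Finset.sum_nonneg fun w _ => hA0 u w))).mp hzero
  intro u hu w hw
  have hu' : u ∈ Cᶜ := Finset.mem_compl.mpr hu
  have h2 : ∑ w ∈ C, A u w = 0 := by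
    have := heach u hu'
    rcases mul_eq_zero.mp this with h | h
    · exact absurd h (ne_of_gt (hs u))
    · exact h
  have := (Finset.sum_eq_zero_iff_of_nonneg (fun w _ => hA0 u w)).mp h2
  exact this w hw

lemma closed_no_incoming_pow {m : ℕ} (A : Matrix (Fin m) (Fin m) ℝ)
    (hA0 : ∀ v w, 0 ≤ A v w) (hA1 : ∀ v, ∑ w, A v w = 1)
    (s : Fin m → ℝ) (hs : ∀ u, 0 < s u) (hfix : ∀ w, s w = ∑ u, s u * A u w)
    (C : Finset (Fin m)) (hC : ∀ u ∈ C, ∀ z, 0 < A u z → z ∈ C) :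
    ∀ (k : ℕ), ∀ u, u ∉ C → ∀ w ∈ C, (A ^ k) u w = 0 := by
  have hno := closed_no_incoming A hA0 hA1 s hs hfix C hC
  intro k
  induction k with
  | zero =>
      intro u hu w hw
      have hne : u ≠ w := fun e => hu (e ▸ hw)
      rw [pow_zero, Matrix.one_apply_ne hne]
  | succ k ih =>
      intro u hu w hw
      rw [pow_succ, Matrix.mul_apply]
      refine Finset.sum_eq_zero fun z _ => ?_
      by_cases hz : z ∈ C
      · rw [ih u hu z hz, zero_mul]
      · rw [hno z hz w hw, mul_zero]

/-- Positivity propagation along the graph within a closed set for nonnegative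
fixed vectors. -/
lemma prop_pos {m : ℕ} (A : Matrix (Fin m) (Fin m) ℝ)
    (hA0 : ∀ v w, 0 ≤ A v w) (C : Finset (Fin m))
    (hC : ∀ u ∈ C, ∀ z, 0 < A u z → z ∈ C)
    (x : Fin m → ℝ) (hx0 : ∀ u ∈ C, 0 ≤ x u)
    (hfix : ∀ w ∈ C, x w = ∑ u ∈ C, x u * A u w) :
    ∀ (k : ℕ), ∀ u ∈ C, ∀ w ∈ C, 0 < (A ^ k) u w → 0 < x u → 0 < x w := by
  have hstep : ∀ u ∈ C, ∀ w ∈ C, 0 < A u w → 0 < x u → 0 < x w := by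
    intro u hu w hw hAuw hxu
    rw [hfix w hw]
    calc (0 : ℝ) < x u * A u w := mul_pos hxu hAuw
      _ ≤ ∑ u' ∈ C, x u' * A u' w :=
          Finset.single_le_sum (fun u' hu' => mul_nonneg (hx0 u' hu') (hA0 u' w)) hu
  intro k
  induction k with
  | zero =>
      intro u hu w hw hk hxu
      rcases eq_or_ne u w with rfl | hne
      · exact hxu
      · rw [pow_zero, Matrix.one_apply_ne hne] at hk
        exact absurd hk (lt_irrefl 0)
  | succ k ih =>
      intro u hu w hw hk hxu
      obtain ⟨z, hz1, hz2⟩ := pow_pos_extract A hA0 hk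
      have hzC : z ∈ C := closed_pow A hA0 C hC k u hu z hz1
      exact hstep z hzC w hw hz2 (ih u hu z hzC hz1 hxu)

theorem stmt4 {n m : ℕ} (Q : Matrix (Fin n) (Fin m) ℝ) (A : Matrix (Fin m) (Fin m) ℝ)
    (hQ : ∀ x w, 0 ≤ Q x w) (hstd : StdForm Q) (hA : RowStoch A)
    (h : Q = Q * A) : A = 1 := by
  obtain ⟨hA0, hA1⟩ := hA
  obtain ⟨-, hnz, hnp, -⟩ := hstd
  -- the vector of column sums of Q is a positive left-fixed vector of A
  set s : Fin m → ℝ := fun u => ∑ x, Q x u with hs_def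
  have hspos : ∀ u, 0 < s u := by
    intro u
    obtain ⟨i, hi⟩ := hnz u
    exact Finset.sum_pos' (fun x _ => hQ x u)
      ⟨i, Finset.mem_univ i, lt_of_le_of_ne (hQ i u) (Ne.symm hi)⟩
  have hsfix : ∀ w, s w = ∑ u, s u * A u w := by
    intro w
    have h1 : ∀ x, Q x w = ∑ u, Q x u * A u w := by
      intro x
      conv_lhs => rw [h]
      rw [Matrix.mul_apply]
    calc s w = ∑ x, ∑ u, Q x u * A u w := Finset.sum_congr rfl fun x _ => h1 x
      _ = ∑ u, ∑ x, Q x u * A u w := Finset.sum_comm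
      _ = ∑ u, s u * A u w := by
          refine Finset.sum_congr rfl fun u _ => ?_
          rw [hs_def, Finset.sum_mul]
  -- reachability is symmetric
  have hsymm : ∀ u u', MReach A u u' → MReach A u' u := by
    intro u u' hr
    obtain ⟨k, hk⟩ := hr
    have hclosed : ∀ a ∈ ReachSet A u', ∀ z, 0 < A a z → z ∈ ReachSet A u' := by
      intro a ha z hz
      obtain ⟨k1, hk1⟩ := mem_reachSet.mp ha
      refine mem_reachSet.mpr ⟨k1 + 1, pow_pos_trans A hA0 hk1 ?_⟩
      rw [pow_one]
      exact hz
    by_contra hnr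
    have hu_not : u ∉ ReachSet A u' := fun hmem => hnr (mem_reachSet.mp hmem)
    have := closed_no_incoming_pow A hA0 hA1 s hspos hsfix (ReachSet A u') hclosed
      k u hu_not u' (mem_reachSet.mpr (mreach_refl A u'))
    rw [this] at hk
    exact lt_irrefl 0 hk
  -- key: off-diagonal entries of A vanish
  have key : ∀ v w : Fin m, v ≠ w → A v w = 0 := by
    intro v w hvw
    by_contra hne
    have hpos : 0 < A v w := lt_of_le_of_ne (hA0 v w) (Ne.symm hne)
    set C := ReachSet A v with hC_def
    have hclosed : ∀ u ∈ C, ∀ z, 0 < A u z → z ∈ C := by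
      intro u hu z hz
      obtain ⟨k1, hk1⟩ := mem_reachSet.mp hu
      refine mem_reachSet.mpr ⟨k1 + 1, pow_pos_trans A hA0 hk1 ?_⟩
      rw [pow_one]
      exact hz
    have hvC : v ∈ C := mem_reachSet.mpr (mreach_refl A v)
    have hwC : w ∈ C := hclosed v hvC w hpos
    have hnoin : ∀ u, u ∉ C → ∀ z ∈ C, A u z = 0 :=
      closed_no_incoming A hA0 hA1 s hspos hsfix C hclosed
    -- every row of Q, restricted to C, is a fixed vector of the C-block of A
    have hrowfix : ∀ (i : Fin n), ∀ w' ∈ C, Q i w' = ∑ u ∈ C, Q i u * A u w' := by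
      intro i w' hw'
      have h1 : Q i w' = ∑ u, Q i u * A u w' := by
        conv_lhs => rw [h]
        rw [Matrix.mul_apply]
      rw [h1]
      refine (Finset.sum_subset (Finset.subset_univ C) (fun u _ hu => ?_)).symm
      rw [hnoin u hu w' hw', mul_zero]
    -- mutual reachability within C
    have hreach : ∀ u ∈ C, ∀ u' ∈ C, MReach A u u' := by
      intro u hu u' hu'
      obtain ⟨k1, hk1⟩ := hsymm v u (mem_reachSet.mp hu)
      obtain ⟨k2, hk2⟩ := mem_reachSet.mp hu'
      exact ⟨k1 + k2, pow_pos_trans A hA0 hk1 hk2⟩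
    -- a row of Q positive on C
    obtain ⟨i0, hi0⟩ := hnz v
    have hx : ∀ u ∈ C, 0 < Q i0 u := by
      have h0 : 0 < Q i0 v := lt_of_le_of_ne (hQ i0 v) (Ne.symm hi0)
      intro u hu
      obtain ⟨k, hk⟩ := hreach v hvC u hu
      exact prop_pos A hA0 C hclosed (fun u' => Q i0 u') (fun u' _ => hQ i0 u')
        (fun w' hw' => hrowfix i0 w' hw') k v hvC u hu hk h0
    have hw0 : Q i0 w ≠ 0 := ne_of_gt (hx w hwC)
    have hc0 : (0 : ℝ) ≤ Q i0 v / Q i0 w := div_nonneg (hQ i0 v) (hQ i0 w)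
    refine hnp v w hvw (Q i0 v / Q i0 w) hc0 ?_
    intro i
    -- minimize the ratio over C
    obtain ⟨u0, hu0C, hmin⟩ :=
      Finset.exists_min_image C (fun u => Q i u / Q i0 u) ⟨v, hvC⟩
    set t : ℝ := Q i u0 / Q i0 u0 with ht_def
    have ht : ∀ u ∈ C, t * Q i0 u ≤ Q i u := by
      intro u hu
      have h2 : t ≤ Q i u / Q i0 u := hmin u hu
      calc t * Q i0 u ≤ (Q i u / Q i0 u) * Q i0 u :=
            mul_le_mul_of_nonneg_right h2 (hQ i0 u)
        _ = Q i u := div_mul_cancel₀ _ (ne_of_gt (hx u hu))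
    set z : Fin m → ℝ := fun u => Q i u - t * Q i0 u with hz_def
    have hz0 : ∀ u ∈ C, 0 ≤ z u := fun u hu => sub_nonneg.mpr (ht u hu)
    have hzfix : ∀ w' ∈ C, z w' = ∑ u ∈ C, z u * A u w' := by
      intro w' hw'
      have : z w' = Q i w' - t * Q i0 w' := rfl
      rw [this, hrowfix i w' hw', hrowfix i0 w' hw', Finset.mul_sum,
        ← Finset.sum_sub_distrib]
      refine Finset.sum_congr rfl fun u _ => ?_
      have : z u = Q i u - t * Q i0 u := rfl
      rw [this]
      ring
    have hzu0 : z u0 = 0 := by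
      have : z u0 = Q i u0 - t * Q i0 u0 := rfl
      rw [this, ht_def, div_mul_cancel₀ _ (ne_of_gt (hx u0 hu0C)), sub_self]
    have hzall : ∀ u ∈ C, z u = 0 := by
      intro u hu
      by_contra hzne
      have hzpos : 0 < z u := lt_of_le_of_ne (hz0 u hu) (Ne.symm hzne)
      obtain ⟨k, hk⟩ := hreach u hu u0 hu0C
      have := prop_pos A hA0 C hclosed z hz0 hzfix k u hu u0 hu0C hk hzpos
      rw [hzu0] at this
      exact lt_irrefl 0 this
    have h1 : Q i v = t * Q i0 v := by
      have := hzall v hvC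
      have h2 : Q i v - t * Q i0 v = 0 := this
      linarith
    have h2 : Q i w = t * Q i0 w := by
      have := hzall w hwC
      have h3 : Q i w - t * Q i0 w = 0 := this
      linarith
    rw [h1, h2]
    field_simp
  -- conclude A = 1
  ext v w
  rcases eq_or_ne v w with rfl | hvw
  · rw [Matrix.one_apply_eq]
    have h1 := hA1 v
    rwa [Fintype.sum_eq_single v (fun w' hw' => key v w' (Ne.symm hw'))] at h1
  · rw [Matrix.one_apply_ne hvw, key v w hvw]
end

section
/- Conditional majorization is antisymmetric with respect to the standard form: if P ≻_c Q and Q ≻_c P for joint probability matrices P and Q, then P↓ = Q↓, where P↓ denotes the standard form. Hence ≻_c is a partial order on standard forms. -/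
open Matrix Finset

noncomputable def dotR {n : ℕ} (a v : Fin n → ℝ) : ℝ := ∑ i, a i * v i

lemma card_filter_lt_fin (n k : ℕ) (hk : k ≤ n) :
    (Finset.univ.filter (fun x : Fin n => (x : ℕ) < k)).card = k := by
  have h := Fintype.card_fin_lt_of_le hk
  rw [Fintype.card_subtype] at h
  convert h using 2

lemma partial_mulVec_le {n : ℕ} {D : Matrix (Fin n) (Fin n) ℝ} (hD : DStoch D)
    {v : Fin n → ℝ} (hv0 : ∀ x, 0 ≤ v x) (hvs : ∀ x x' : Fin n, x ≤ x' → v x' ≤ v x)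
    (k : ℕ) :
    ∑ x ∈ Finset.univ.filter (fun x : Fin n => (x : ℕ) < k), D.mulVec v x
      ≤ ∑ x ∈ Finset.univ.filter (fun x : Fin n => (x : ℕ) < k), v x := by
  classical
  set A := Finset.univ.filter (fun x : Fin n => (x : ℕ) < k) with hA
  set a : Fin n → ℝ := fun x' => ∑ x ∈ A, D x x' with ha
  have ha0 : ∀ x', 0 ≤ a x' := fun x' => Finset.sum_nonneg fun x _ => hD.1 x x'
  have ha1 : ∀ x', a x' ≤ 1 := by
    intro x'
    have h1 : a x' ≤ ∑ x, D x x' :=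
      Finset.sum_le_sum_of_subset_of_nonneg (Finset.subset_univ A)
        (fun x _ _ => hD.1 x x')
    rw [hD.2.2 x'] at h1; exact h1
  have hsum : ∑ x', a x' = A.card := by
    rw [Finset.sum_comm]
    simp [hD.2.1]
  have hlhs : ∑ x ∈ A, D.mulVec v x = ∑ x', a x' * v x' := by
    simp only [Matrix.mulVec, dotProduct, ha]
    rw [Finset.sum_comm]
    simp [Finset.sum_mul]
  rw [hlhs]
  by_cases hk : n ≤ k
  · have hAuniv : A = Finset.univ := by
      ext x; simp [hA, lt_of_lt_of_le x.isLt hk]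
    have haeq : ∀ x', a x' = 1 := by
      intro x'; rw [ha]; simp only [hAuniv]; exact hD.2.2 x'
    rw [hAuniv]
    exact le_of_eq (Finset.sum_congr rfl fun x _ => by rw [haeq x, one_mul])
  · push_neg at hk
    set κ : Fin n := ⟨k, hk⟩ with hκ
    have hcard : (A.card : ℝ) = k := by rw [hA, card_filter_lt_fin n k hk.le]
    have key : ∑ x', a x' * v x' - ∑ x ∈ A, v x ≤ 0 := by
      have hsplit : ∑ x', a x' * v x' = ∑ x ∈ A, a x * v x + ∑ x ∈ Aᶜ, a x * v x := by
        rw [← Finset.sum_add_sum_compl A]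
      rw [hsplit]
      have h1 : ∑ x ∈ A, a x * v x - ∑ x ∈ A, v x = ∑ x ∈ A, (a x - 1) * v x := by
        rw [← Finset.sum_sub_distrib]; congr 1; ext x; ring
      have h2 : ∑ x ∈ A, (a x - 1) * v x ≤ ∑ x ∈ A, (a x - 1) * v κ := by
        apply Finset.sum_le_sum
        intro x hx
        have hxk : x ≤ κ := by
          have : (x : ℕ) < k := by simpa [hA] using hx
          exact le_of_lt (by exact_mod_cast this : x < κ)
        have := hvs x κ hxk
        nlinarith [ha1 x, hv0 x]
      have h3 : ∑ x ∈ Aᶜ, a x * v x ≤ ∑ x ∈ Aᶜ, a x * v κ := by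
        apply Finset.sum_le_sum
        intro x hx
        have hxk : κ ≤ x := by
          have hx' : ¬ (x : ℕ) < k := by
            have := Finset.mem_compl.mp hx
            simpa [hA] using this
          exact le_of_not_gt (by exact_mod_cast hx' : ¬ x < κ)
        have := hvs κ x hxk
        nlinarith [ha0 x]
      have h4 : ∑ x ∈ A, (a x - 1) * v κ + ∑ x ∈ Aᶜ, a x * v κ = 0 := by
        have heq : ∑ x ∈ A, (a x - 1) * v κ + ∑ x ∈ Aᶜ, a x * v κ
            = (∑ x', a x') * v κ - (A.card : ℝ) * v κ := by
          have e1 : ∑ x ∈ A, (a x - 1) * v κ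
              = ∑ x ∈ A, a x * v κ - (A.card : ℝ) * v κ := by
            simp only [sub_mul, one_mul]
            rw [Finset.sum_sub_distrib, Finset.sum_const, nsmul_eq_mul]
          rw [e1, Finset.sum_mul, ← Finset.sum_add_sum_compl A (fun x => a x * v κ)]
          ring
        rw [heq, hsum, hcard]; ring
      linarith
    linarith

lemma partsum_succ {n m : ℕ} (Q : Matrix (Fin n) (Fin m) ℝ) (x : Fin n) (w : Fin m) :
    PartSum Q ((x : ℕ) + 1) w = Q x w + PartSum Q (x : ℕ) w := by
  unfold PartSum
  have hins : Finset.univ.filter (fun i : Fin n => (i : ℕ) < (x : ℕ) + 1)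
      = insert x (Finset.univ.filter (fun i : Fin n => (i : ℕ) < (x : ℕ))) := by
    ext i
    simp only [Finset.mem_filter, Finset.mem_univ, true_and, Finset.mem_insert]
    constructor
    · intro h
      rcases Nat.lt_succ_iff_lt_or_eq.mp h with h | h
      · exact Or.inr (by simpa using h)
      · exact Or.inl (Fin.ext h)
    · rintro (rfl | h)
      · exact Nat.lt_succ_self _
      · exact Nat.lt_succ_of_lt h
  rw [hins, Finset.sum_insert (by simp)]

lemma entry_eq_partsum {n m : ℕ} (Q : Matrix (Fin n) (Fin m) ℝ) (x : Fin n) (w : Fin m) :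
    Q x w = PartSum Q ((x : ℕ) + 1) w - PartSum Q (x : ℕ) w := by
  rw [partsum_succ]; ring

lemma condmaj_partsum_le {n ℓ m J : ℕ} {P : Matrix (Fin n) (Fin ℓ) ℝ}
    {Q : Matrix (Fin n) (Fin m) ℝ} {D : Fin J → Matrix (Fin n) (Fin n) ℝ}
    {R : Fin J → Matrix (Fin ℓ) (Fin m) ℝ}
    (hD : ∀ j, DStoch (D j)) (hR : ∀ j y w, 0 ≤ R j y w)
    (hQeq : Q = ∑ j, D j * P * R j)
    (hP0 : ∀ x y, 0 ≤ P x y) (hPs : ∀ y, ∀ x x' : Fin n, x ≤ x' → P x' y ≤ P x y)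
    (k : ℕ) (w : Fin m) :
    PartSum Q k w ≤ ∑ y, (∑ j, R j y w) * PartSum P k y := by
  classical
  set A := Finset.univ.filter (fun x : Fin n => (x : ℕ) < k) with hA
  have hQw : ∀ x, Q x w = ∑ j, ∑ y, (D j).mulVec (fun x' => P x' y) x * R j y w := by
    intro x
    rw [hQeq]
    rw [Matrix.sum_apply]
    refine Finset.sum_congr rfl fun j _ => ?_
    rw [Matrix.mul_apply]
    refine Finset.sum_congr rfl fun y _ => ?_
    rw [Matrix.mul_apply]
    rfl
  have hps : PartSum Q k w = ∑ j, ∑ y, (∑ x ∈ A, (D j).mulVec (fun x' => P x' y) x) * R j y w := by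
    unfold PartSum
    rw [← hA]
    rw [Finset.sum_congr rfl fun x _ => hQw x]
    rw [Finset.sum_comm]
    refine Finset.sum_congr rfl fun j _ => ?_
    rw [Finset.sum_comm]
    refine Finset.sum_congr rfl fun y _ => ?_
    rw [Finset.sum_mul]
  rw [hps]
  have hbd : ∀ j, ∀ y, (∑ x ∈ A, (D j).mulVec (fun x' => P x' y) x) * R j y w
      ≤ PartSum P k y * R j y w := by
    intro j y
    apply mul_le_mul_of_nonneg_right _ (hR j y w)
    exact partial_mulVec_le (hD j) (fun x => hP0 x y) (fun x x' h => hPs y x x' h) k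
  calc ∑ j, ∑ y, (∑ x ∈ A, (D j).mulVec (fun x' => P x' y) x) * R j y w
      ≤ ∑ j, ∑ y, PartSum P k y * R j y w :=
        Finset.sum_le_sum fun j _ => Finset.sum_le_sum fun y _ => hbd j y
    _ = ∑ y, (∑ j, R j y w) * PartSum P k y := by
        rw [Finset.sum_comm]
        refine Finset.sum_congr rfl fun y _ => ?_
        rw [Finset.sum_mul]
        refine Finset.sum_congr rfl fun j _ => ?_
        ring

lemma mixing_exact {n ℓ m : ℕ} {P : Matrix (Fin n) (Fin ℓ) ℝ}
    {Q : Matrix (Fin n) (Fin m) ℝ}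
    (hP0 : ∀ x y, 0 ≤ P x y) (hQ0 : ∀ x w, 0 ≤ Q x w)
    (hPs : ∀ y, ∀ x x' : Fin n, x ≤ x' → P x' y ≤ P x y)
    (hQs : ∀ w, ∀ x x' : Fin n, x ≤ x' → Q x' w ≤ Q x w)
    (h1 : CondMaj P Q) (h2 : CondMaj Q P) :
    ∃ (S : Matrix (Fin ℓ) (Fin m) ℝ) (S' : Matrix (Fin m) (Fin ℓ) ℝ),
      RowStoch S ∧ RowStoch S' ∧
      (∀ x w, Q x w = ∑ y, S y w * P x y) ∧
      (∀ x y, P x y = ∑ w, S' w y * Q x w) := by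
  classical
  obtain ⟨J, D, R, hD, hR, hRS, hQeq⟩ := h1
  obtain ⟨J', D', R', hD', hR', hRS', hPeq⟩ := h2
  set S : Matrix (Fin ℓ) (Fin m) ℝ := fun y w => ∑ j, R j y w with hS
  set S' : Matrix (Fin m) (Fin ℓ) ℝ := fun w y => ∑ j, R' j w y with hS'
  have hRSS : RowStoch S := by
    constructor
    · intro y w; exact Finset.sum_nonneg fun j _ => hR j y w
    · intro y
      have := hRS.2 y
      simpa [Matrix.sum_apply] using this
  have hRSS' : RowStoch S' := by
    constructor
    · intro w y; exact Finset.sum_nonneg fun j _ => hR' j w y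
    · intro w
      have := hRS'.2 w
      simpa [Matrix.sum_apply] using this
  have hle1 : ∀ k (w : Fin m), PartSum Q k w ≤ ∑ y, S y w * PartSum P k y :=
    fun k w => condmaj_partsum_le hD hR hQeq hP0 hPs k w
  have hle2 : ∀ k (y : Fin ℓ), PartSum P k y ≤ ∑ w, S' w y * PartSum Q k w :=
    fun k y => condmaj_partsum_le hD' hR' hPeq hQ0 hQs k y
  have hPhi1 : ∀ k, ∑ w, PartSum Q k w ≤ ∑ y, PartSum P k y := by
    intro k
    calc ∑ w, PartSum Q k w ≤ ∑ w, ∑ y, S y w * PartSum P k y :=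
          Finset.sum_le_sum fun w _ => hle1 k w
      _ = ∑ y, PartSum P k y := by
          rw [Finset.sum_comm]
          refine Finset.sum_congr rfl fun y _ => ?_
          rw [← Finset.sum_mul, hRSS.2 y, one_mul]
  have hPhi2 : ∀ k, ∑ y, PartSum P k y ≤ ∑ w, PartSum Q k w := by
    intro k
    calc ∑ y, PartSum P k y ≤ ∑ y, ∑ w, S' w y * PartSum Q k w :=
          Finset.sum_le_sum fun y _ => hle2 k y
      _ = ∑ w, PartSum Q k w := by
          rw [Finset.sum_comm]
          refine Finset.sum_congr rfl fun w _ => ?_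
          rw [← Finset.sum_mul, hRSS'.2 w, one_mul]
  have heq1 : ∀ k (w : Fin m), PartSum Q k w = ∑ y, S y w * PartSum P k y := by
    intro k
    have hPhiEq : ∑ w, (∑ y, S y w * PartSum P k y - PartSum Q k w) = 0 := by
      rw [Finset.sum_sub_distrib]
      have e : ∑ w, ∑ y, S y w * PartSum P k y = ∑ y, PartSum P k y := by
        rw [Finset.sum_comm]
        refine Finset.sum_congr rfl fun y _ => ?_
        rw [← Finset.sum_mul, hRSS.2 y, one_mul]
      rw [e]
      linarith [hPhi1 k, hPhi2 k]
    have hzero := (Finset.sum_eq_zero_iff_of_nonneg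
      (fun w _ => by linarith [hle1 k w])).mp hPhiEq
    intro w
    have := hzero w (Finset.mem_univ w)
    linarith
  have heq2 : ∀ k (y : Fin ℓ), PartSum P k y = ∑ w, S' w y * PartSum Q k w := by
    intro k
    have hPhiEq : ∑ y, (∑ w, S' w y * PartSum Q k w - PartSum P k y) = 0 := by
      rw [Finset.sum_sub_distrib]
      have e : ∑ y, ∑ w, S' w y * PartSum Q k w = ∑ w, PartSum Q k w := by
        rw [Finset.sum_comm]
        refine Finset.sum_congr rfl fun w _ => ?_
        rw [← Finset.sum_mul, hRSS'.2 w, one_mul]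
      rw [e]
      linarith [hPhi1 k, hPhi2 k]
    have hzero := (Finset.sum_eq_zero_iff_of_nonneg
      (fun y _ => by linarith [hle2 k y])).mp hPhiEq
    intro y
    have := hzero y (Finset.mem_univ y)
    linarith
  refine ⟨S, S', hRSS, hRSS', ?_, ?_⟩
  · intro x w
    rw [entry_eq_partsum Q x w, heq1 _ w, heq1 _ w, ← Finset.sum_sub_distrib]
    refine Finset.sum_congr rfl fun y _ => ?_
    rw [entry_eq_partsum P x y]
    ring
  · intro x y
    rw [entry_eq_partsum P x y, heq2 _ y, heq2 _ y, ← Finset.sum_sub_distrib]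
    refine Finset.sum_congr rfl fun w _ => ?_
    rw [entry_eq_partsum Q x w]
    ring

lemma dotR_sub {n : ℕ} (a v w : Fin n → ℝ) : dotR a (v - w) = dotR a v - dotR a w := by
  unfold dotR
  rw [← Finset.sum_sub_distrib]
  refine Finset.sum_congr rfl fun i _ => ?_
  simp [mul_sub]

lemma exists_sep_aux {n : ℕ} (D : Finset (Fin n → ℝ)) :
    ∃ a : Fin n → ℝ, ∀ d ∈ D, d ≠ 0 → dotR a d ≠ 0 := by
  classical
  induction D using Finset.induction_on with
  | empty => exact ⟨0, fun d hd => absurd hd (Finset.notMem_empty d)⟩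
  | insert d₀ D' hnotmem ih =>
    obtain ⟨a, ha⟩ := ih
    by_cases hd₀ : d₀ = 0
    · refine ⟨a, fun d hd hdne => ?_⟩
      rcases Finset.mem_insert.mp hd with rfl | hd
      · exact absurd hd₀ hdne
      · exact ha d hd hdne
    · have : ∃ i₀, d₀ i₀ ≠ 0 := by
        by_contra h
        push_neg at h
        exact hd₀ (funext h)
      obtain ⟨i₀, hi₀⟩ := this
      set g : Fin n → ℝ := fun i => if i = i₀ then 1 else 0 with hg
      have hgd₀ : dotR g d₀ = d₀ i₀ := by
        unfold dotR
        rw [hg]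
        simp [Finset.sum_ite_eq']
      set B : Finset ℝ := (insert d₀ D').image (fun d => -(dotR a d) / (dotR g d)) with hB
      obtain ⟨ε, hε⟩ := Infinite.exists_notMem_finset B
      refine ⟨a + ε • g, fun d hd hdne => ?_⟩
      have hdot : dotR (a + ε • g) d = dotR a d + ε * dotR g d := by
        unfold dotR
        rw [Finset.mul_sum, ← Finset.sum_add_distrib]
        refine Finset.sum_congr rfl fun i _ => ?_
        simp only [Pi.add_apply, Pi.smul_apply, smul_eq_mul]
        ring
      rw [hdot]
      rcases Finset.mem_insert.mp hd with rfl | hdD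
      · intro hcontra
        have hgdne : dotR g d ≠ 0 := by rw [hgd₀]; exact hi₀
        apply hε
        rw [hB]
        apply Finset.mem_image.mpr
        refine ⟨d, Finset.mem_insert_self _ _, ?_⟩
        field_simp
        linarith
      · by_cases hgd : dotR g d = 0
        · rw [hgd]
          simpa using ha d hdD hdne
        · intro hcontra
          apply hε
          rw [hB]
          apply Finset.mem_image.mpr
          refine ⟨d, Finset.mem_insert_of_mem hdD, ?_⟩
          field_simp
          linarith

lemma exists_sep {n : ℕ} (V : Finset (Fin n → ℝ)) :
    ∃ a : Fin n → ℝ, ∀ v₁ ∈ V, ∀ v₂ ∈ V, v₁ ≠ v₂ → dotR a v₁ ≠ dotR a v₂ := by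
  classical
  obtain ⟨a, ha⟩ := exists_sep_aux ((V ×ˢ V).image (fun p => p.1 - p.2))
  refine ⟨a, fun v₁ h₁ v₂ h₂ hne hcontra => ?_⟩
  have hmem : v₁ - v₂ ∈ (V ×ˢ V).image (fun p => p.1 - p.2) :=
    Finset.mem_image.mpr ⟨(v₁, v₂), Finset.mem_product.mpr ⟨h₁, h₂⟩, rfl⟩
  have hne0 : v₁ - v₂ ≠ 0 := sub_ne_zero.mpr hne
  have := ha _ hmem hne0
  rw [dotR_sub] at this
  exact this (by linarith)

lemma dotR_col_comb {n ι : ℕ} (a : Fin n → ℝ) (T : Finset (Fin ι))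
    (coef : Fin ι → ℝ) (col : Fin ι → Fin n → ℝ) :
    dotR a (fun x => ∑ y ∈ T, coef y * col y x) = ∑ y ∈ T, coef y * dotR a (col y) := by
  unfold dotR
  simp only [Finset.mul_sum]
  rw [Finset.sum_comm]
  exact Finset.sum_congr rfl fun y _ => Finset.sum_congr rfl fun i _ => by ring

lemma peel {n ℓ m : ℕ} (P : Matrix (Fin n) (Fin ℓ) ℝ) (Q : Matrix (Fin n) (Fin m) ℝ)
    (S : Matrix (Fin ℓ) (Fin m) ℝ) (S' : Matrix (Fin m) (Fin ℓ) ℝ)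
    (a : Fin n → ℝ)
    (hS0 : ∀ y w, 0 ≤ S y w) (hS'0 : ∀ w y, 0 ≤ S' w y)
    (hc : ∀ y, 0 < ColSum P y) (hd : ∀ w, 0 < ColSum Q w)
    (hu : ∀ y y' : Fin ℓ, (ColSum P y)⁻¹ * dotR a (fun x => P x y)
        = (ColSum P y')⁻¹ * dotR a (fun x => P x y') → y = y')
    (hv : ∀ w w' : Fin m, (ColSum Q w)⁻¹ * dotR a (fun x => Q x w)
        = (ColSum Q w')⁻¹ * dotR a (fun x => Q x w') → w = w') :
    ∀ (N : ℕ) (Y : Finset (Fin ℓ)) (W : Finset (Fin m)), Y.card = N →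
    (∀ w ∈ W, ∀ x, Q x w = ∑ y ∈ Y, S y w * P x y) →
    (∀ y ∈ Y, ∀ x, P x y = ∑ w ∈ W, S' w y * Q x w) →
    (∀ y ∈ Y, ∑ w ∈ W, S y w = 1) →
    (∀ w ∈ W, ∑ y ∈ Y, S' w y = 1) →
    (∀ w ∈ W, ∃ y ∈ Y, ∀ x, Q x w = P x y) ∧
    (∀ y ∈ Y, ∃ w ∈ W, ∀ x, P x y = Q x w) := by
  classical
  set r : Fin ℓ → ℝ := fun y => (ColSum P y)⁻¹ * dotR a (fun x => P x y) with hr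
  set s : Fin m → ℝ := fun w => (ColSum Q w)⁻¹ * dotR a (fun x => Q x w) with hs
  have hdotP : ∀ y, dotR a (fun x => P x y) = ColSum P y * r y := by
    intro y
    have hry : r y = (ColSum P y)⁻¹ * dotR a (fun x => P x y) := rfl
    rw [hry, ← mul_assoc, mul_inv_cancel₀ (hc y).ne', one_mul]
  have hdotQ : ∀ w, dotR a (fun x => Q x w) = ColSum Q w * s w := by
    intro w
    have hsw : s w = (ColSum Q w)⁻¹ * dotR a (fun x => Q x w) := rfl
    rw [hsw, ← mul_assoc, mul_inv_cancel₀ (hd w).ne', one_mul]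
  intro N
  induction N with
  | zero =>
    intro Y W hcard hq hp hrow hrow'
    have hY : Y = ∅ := Finset.card_eq_zero.mp hcard
    have hW : W = ∅ := by
      by_contra hWne
      obtain ⟨w, hw⟩ := Finset.nonempty_iff_ne_empty.mpr hWne
      have h0 : ColSum Q w = 0 := by
        unfold ColSum
        rw [Finset.sum_congr rfl fun x _ => hq w hw x]
        simp [hY]
      linarith [hd w]
    subst hY; subst hW
    constructor <;> intro z hz <;> exact absurd hz (Finset.notMem_empty z)
  | succ N ih =>
    intro Y W hcard hq hp hrow hrow'
    have hYne : Y.Nonempty := Finset.card_pos.mp (by omega)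
    have hWne : W.Nonempty := by
      by_contra hWne
      rw [Finset.not_nonempty_iff_eq_empty] at hWne
      obtain ⟨y, hy⟩ := hYne
      have := hrow y hy
      rw [hWne] at this
      simp at this
    obtain ⟨y0, hy0Y, hy0max⟩ := Finset.exists_max_image Y r hYne
    obtain ⟨w0, hw0W, hw0max⟩ := Finset.exists_max_image W s hWne
    -- column sum decompositions
    have hdcol : ∀ w ∈ W, ColSum Q w = ∑ y ∈ Y, S y w * ColSum P y := by
      intro w hw
      unfold ColSum
      rw [Finset.sum_congr rfl fun x _ => hq w hw x, Finset.sum_comm]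
      exact Finset.sum_congr rfl fun y _ => by rw [Finset.mul_sum]
    have hccol : ∀ y ∈ Y, ColSum P y = ∑ w ∈ W, S' w y * ColSum Q w := by
      intro y hy
      unfold ColSum
      rw [Finset.sum_congr rfl fun x _ => hp y hy x, Finset.sum_comm]
      exact Finset.sum_congr rfl fun w _ => by rw [Finset.mul_sum]
    have hdq : ∀ w ∈ W, dotR a (fun x => Q x w) = ∑ y ∈ Y, S y w * dotR a (fun x => P x y) := by
      intro w hw
      have : (fun x => Q x w) = fun x => ∑ y ∈ Y, S y w * P x y := funext (hq w hw)
      rw [this, dotR_col_comb]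
    have hdp : ∀ y ∈ Y, dotR a (fun x => P x y) = ∑ w ∈ W, S' w y * dotR a (fun x => Q x w) := by
      intro y hy
      have : (fun x => P x y) = fun x => ∑ w ∈ W, S' w y * Q x w := funext (hp y hy)
      rw [this, dotR_col_comb]
    -- s w ≤ r y0 for w ∈ W
    have hsle : ∀ w ∈ W, s w ≤ r y0 := by
      intro w hw
      have h1 : ColSum Q w * s w ≤ ColSum Q w * r y0 := by
        rw [← hdotQ w, hdq w hw, hdcol w hw, Finset.sum_mul]
        refine Finset.sum_le_sum fun y hy => ?_
        rw [hdotP y]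
        have hnn : 0 ≤ S y w * ColSum P y := mul_nonneg (hS0 y w) (hc y).le
        have := mul_le_mul_of_nonneg_left (hy0max y hy) hnn
        nlinarith [this]
      exact le_of_mul_le_mul_left (by linarith) (hd w)
    have hrle : ∀ y ∈ Y, r y ≤ s w0 := by
      intro y hy
      have h1 : ColSum P y * r y ≤ ColSum P y * s w0 := by
        rw [← hdotP y, hdp y hy, hccol y hy, Finset.sum_mul]
        refine Finset.sum_le_sum fun w hw => ?_
        rw [hdotQ w]
        have hnn : 0 ≤ S' w y * ColSum Q w := mul_nonneg (hS'0 w y) (hd w).le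
        have := mul_le_mul_of_nonneg_left (hw0max w hw) hnn
        nlinarith [this]
      exact le_of_mul_le_mul_left (by linarith) (hc y)
    have hαβ : r y0 = s w0 := le_antisymm (hrle y0 hy0Y) (hsle w0 hw0W)
    -- strictness below the top
    have hrlt : ∀ y ∈ Y, y ≠ y0 → r y < r y0 := by
      intro y hy hne
      rcases lt_or_eq_of_le (hy0max y hy) with h | h
      · exact h
      · exact absurd (hu y y0 h) hne
    have hslt : ∀ w ∈ W, w ≠ w0 → s w < s w0 := by
      intro w hw hne
      rcases lt_or_eq_of_le (hw0max w hw) with h | h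
      · exact h
      · exact absurd (hv w w0 h) hne
    -- S y w0 = 0 for y ≠ y0
    have hSzero : ∀ y ∈ Y, y ≠ y0 → S y w0 = 0 := by
      have hsum0 : ∑ y ∈ Y, S y w0 * ColSum P y * (r y0 - r y) = 0 := by
        have e1 : ∑ y ∈ Y, S y w0 * ColSum P y * (r y0 - r y)
            = (∑ y ∈ Y, S y w0 * ColSum P y) * r y0
              - ∑ y ∈ Y, S y w0 * (ColSum P y * r y) := by
          rw [Finset.sum_mul, ← Finset.sum_sub_distrib]
          exact Finset.sum_congr rfl fun y _ => by ring
        rw [e1]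
        have e2 : ∑ y ∈ Y, S y w0 * (ColSum P y * r y) = ColSum Q w0 * s w0 := by
          rw [← hdotQ w0, hdq w0 hw0W]
          exact Finset.sum_congr rfl fun y _ => by rw [hdotP y]
        rw [e2, ← hdcol w0 hw0W, ← hαβ]
        ring
      have hterms := (Finset.sum_eq_zero_iff_of_nonneg (fun y hy =>
        mul_nonneg (mul_nonneg (hS0 y w0) (hc y).le)
          (by linarith [hy0max y hy]))).mp hsum0
      intro y hy hne
      have hterm := hterms y hy
      have h1 : 0 < r y0 - r y := by linarith [hrlt y hy hne]
      have h2 := hc y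
      by_contra hS
      have hSpos : 0 < S y w0 := lt_of_le_of_ne (hS0 y w0) (Ne.symm hS)
      nlinarith [mul_pos (mul_pos hSpos h2) h1]
    have hS'zero : ∀ w ∈ W, w ≠ w0 → S' w y0 = 0 := by
      have hsum0 : ∑ w ∈ W, S' w y0 * ColSum Q w * (s w0 - s w) = 0 := by
        have e1 : ∑ w ∈ W, S' w y0 * ColSum Q w * (s w0 - s w)
            = (∑ w ∈ W, S' w y0 * ColSum Q w) * s w0
              - ∑ w ∈ W, S' w y0 * (ColSum Q w * s w) := by
          rw [Finset.sum_mul, ← Finset.sum_sub_distrib]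
          exact Finset.sum_congr rfl fun w _ => by ring
        rw [e1]
        have e2 : ∑ w ∈ W, S' w y0 * (ColSum Q w * s w) = ColSum P y0 * r y0 := by
          rw [← hdotP y0, hdp y0 hy0Y]
          exact Finset.sum_congr rfl fun w _ => by rw [hdotQ w]
        rw [e2, ← hccol y0 hy0Y, hαβ]
        ring
      have hterms := (Finset.sum_eq_zero_iff_of_nonneg (fun w hw =>
        mul_nonneg (mul_nonneg (hS'0 w y0) (hd w).le)
          (by linarith [hw0max w hw]))).mp hsum0
      intro w hw hne
      have hterm := hterms w hw
      have h1 : 0 < s w0 - s w := by linarith [hslt w hw hne]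
      have h2 := hd w
      by_contra hS
      have hSpos : 0 < S' w y0 := lt_of_le_of_ne (hS'0 w y0) (Ne.symm hS)
      nlinarith [mul_pos (mul_pos hSpos h2) h1]
    -- top columns proportional
    have hqw0 : ∀ x, Q x w0 = S y0 w0 * P x y0 := by
      intro x
      rw [hq w0 hw0W x]
      exact Finset.sum_eq_single_of_mem y0 hy0Y
        (fun y hy hne => by rw [hSzero y hy hne, zero_mul])
    have hpy0 : ∀ x, P x y0 = S' w0 y0 * Q x w0 := by
      intro x
      rw [hp y0 hy0Y x]
      exact Finset.sum_eq_single_of_mem w0 hw0W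
        (fun w hw hne => by rw [hS'zero w hw hne, zero_mul])
    have hpnz : ∃ x, P x y0 ≠ 0 := by
      by_contra h
      push_neg at h
      have : ColSum P y0 = 0 := by unfold ColSum; simp [h]
      linarith [hc y0]
    have hprod : S' w0 y0 * S y0 w0 = 1 := by
      obtain ⟨x, hx⟩ := hpnz
      have h1 : P x y0 = S' w0 y0 * (S y0 w0 * P x y0) := by
        conv_lhs => rw [hpy0 x, hqw0 x]
      have h2 : (S' w0 y0 * S y0 w0 - 1) * P x y0 = 0 := by linear_combination -h1
      rcases mul_eq_zero.mp h2 with h | h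
      · linarith
      · exact absurd h hx
    have hLle : S y0 w0 ≤ 1 := by
      rw [← hrow y0 hy0Y]
      exact Finset.single_le_sum (fun w _ => hS0 y0 w) hw0W
    have hMle : S' w0 y0 ≤ 1 := by
      rw [← hrow' w0 hw0W]
      exact Finset.single_le_sum (fun y _ => hS'0 w0 y) hy0Y
    have hL1 : S y0 w0 = 1 := by
      have h := mul_le_mul_of_nonneg_right hMle (hS0 y0 w0)
      rw [hprod, one_mul] at h
      linarith
    have hM1 : S' w0 y0 = 1 := by
      have h := hprod
      rw [hL1, mul_one] at h
      exact h
    have hqp0 : ∀ x, Q x w0 = P x y0 := fun x => by rw [hqw0 x, hL1, one_mul]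
    -- remaining zero weights
    have hSzero2 : ∀ w ∈ W, w ≠ w0 → S y0 w = 0 := by
      have hsum : ∑ w ∈ W.erase w0, S y0 w = 0 := by
        have := Finset.add_sum_erase W (fun w => S y0 w) hw0W
        beta_reduce at this
        rw [hrow y0 hy0Y, hL1] at this
        linarith
      intro w hw hne
      exact (Finset.sum_eq_zero_iff_of_nonneg (fun w _ => hS0 y0 w)).mp hsum w
        (Finset.mem_erase.mpr ⟨hne, hw⟩)
    have hS'zero2 : ∀ y ∈ Y, y ≠ y0 → S' w0 y = 0 := by
      have hsum : ∑ y ∈ Y.erase y0, S' w0 y = 0 := by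
        have := Finset.add_sum_erase Y (fun y => S' w0 y) hy0Y
        beta_reduce at this
        rw [hrow' w0 hw0W, hM1] at this
        linarith
      intro y hy hne
      exact (Finset.sum_eq_zero_iff_of_nonneg (fun y _ => hS'0 w0 y)).mp hsum y
        (Finset.mem_erase.mpr ⟨hne, hy⟩)
    -- apply IH to the erased sets
    have hcard' : (Y.erase y0).card = N := by
      rw [Finset.card_erase_of_mem hy0Y, hcard]
      omega
    have hq' : ∀ w ∈ W.erase w0, ∀ x, Q x w = ∑ y ∈ Y.erase y0, S y w * P x y := by
      intro w hw x
      obtain ⟨hne, hwW⟩ := Finset.mem_erase.mp hw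
      rw [hq w hwW x, ← Finset.add_sum_erase Y _ hy0Y,
        hSzero2 w hwW hne, zero_mul, zero_add]
    have hp' : ∀ y ∈ Y.erase y0, ∀ x, P x y = ∑ w ∈ W.erase w0, S' w y * Q x w := by
      intro y hy x
      obtain ⟨hne, hyY⟩ := Finset.mem_erase.mp hy
      rw [hp y hyY x, ← Finset.add_sum_erase W _ hw0W,
        hS'zero2 y hyY hne, zero_mul, zero_add]
    have hrow2 : ∀ y ∈ Y.erase y0, ∑ w ∈ W.erase w0, S y w = 1 := by
      intro y hy
      obtain ⟨hne, hyY⟩ := Finset.mem_erase.mp hy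
      have := Finset.add_sum_erase W (fun w => S y w) hw0W
      beta_reduce at this
      rw [hrow y hyY, hSzero y hyY hne] at this
      linarith
    have hrow2' : ∀ w ∈ W.erase w0, ∑ y ∈ Y.erase y0, S' w y = 1 := by
      intro w hw
      obtain ⟨hne, hwW⟩ := Finset.mem_erase.mp hw
      have := Finset.add_sum_erase Y (fun y => S' w y) hy0Y
      beta_reduce at this
      rw [hrow' w hwW, hS'zero w hwW hne] at this
      linarith
    obtain ⟨ihA, ihB⟩ := ih (Y.erase y0) (W.erase w0) hcard' hq' hp' hrow2 hrow2'
    constructor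
    · intro w hw
      by_cases hwe : w = w0
      · exact ⟨y0, hy0Y, by rw [hwe]; exact hqp0⟩
      · obtain ⟨y, hy, hcol⟩ := ihA w (Finset.mem_erase.mpr ⟨hwe, hw⟩)
        exact ⟨y, Finset.mem_of_mem_erase hy, hcol⟩
    · intro y hy
      by_cases hye : y = y0
      · exact ⟨w0, hw0W, by rw [hye]; exact fun x => (hqp0 x).symm⟩
      · obtain ⟨w, hw, hcol⟩ := ihB y (Finset.mem_erase.mpr ⟨hye, hy⟩)
        exact ⟨w, Finset.mem_of_mem_erase hw, hcol⟩

lemma cond4_asymm (F G : ℝ) (f g : ℕ → ℝ)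
    (h1 : G < F ∨ (G = F ∧ ∃ k, (∀ j < k, f j = g j) ∧ g k < f k))
    (h2 : F < G ∨ (F = G ∧ ∃ k, (∀ j < k, g j = f j) ∧ f k < g k)) : False := by
  rcases h1 with h1 | ⟨hEq1, k, hfk, hgk⟩
  · rcases h2 with h2 | ⟨hEq2, _⟩
    · linarith
    · linarith
  · rcases h2 with h2 | ⟨hEq2, k', hgk', hfk'⟩
    · linarith
    · rcases lt_trichotomy k k' with h | h | h
      · have := hgk' k h; linarith
      · subst h; linarith
      · have := hfk k' h; linarith

lemma strictMono_fin_id (n : ℕ) (e : Fin n → Fin n) (he : StrictMono e) : ∀ i, e i = i := by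
  have h2 : Function.Surjective e := Finite.surjective_of_injective he.injective
  intro i
  have h4 : (StrictMono.orderIsoOfSurjective e he h2) i = e i :=
    congrFun (StrictMono.coe_orderIsoOfSurjective e he h2) i
  rw [Subsingleton.elim (StrictMono.orderIsoOfSurjective e he h2) (OrderIso.refl (Fin n))] at h4
  exact h4.symm

lemma dotR_mul_left {n : ℕ} (a p : Fin n → ℝ) (t : ℝ) :
    dotR a (fun x => t * p x) = t * dotR a p := by
  unfold dotR
  rw [Finset.mul_sum]
  exact Finset.sum_congr rfl fun i _ => by ring

theorem stmt5 {n ℓ m : ℕ} (P : Matrix (Fin n) (Fin ℓ) ℝ) (Q : Matrix (Fin n) (Fin m) ℝ)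
    (hP : JointProb P) (hQ : JointProb Q)
    (hPstd : StdForm P) (hQstd : StdForm Q)
    (h1 : CondMaj P Q) (h2 : CondMaj Q P) :
    ℓ = m ∧ HEq P Q := by
  classical
  obtain ⟨hP0, -⟩ := hP
  obtain ⟨hQ0, -⟩ := hQ
  obtain ⟨hPs, hPnz, hPprop, hPord⟩ := hPstd
  obtain ⟨hQs, hQnz, hQprop, hQord⟩ := hQstd
  obtain ⟨S, S', hSrs, hS'rs, hQP, hPQ⟩ := mixing_exact hP0 hQ0 hPs hQs h1 h2
  have hc : ∀ y, 0 < ColSum P y := by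
    intro y
    obtain ⟨x, hx⟩ := hPnz y
    have hpos : 0 < P x y := lt_of_le_of_ne (hP0 x y) (Ne.symm hx)
    have hle : P x y ≤ ColSum P y :=
      Finset.single_le_sum (fun i _ => hP0 i y) (Finset.mem_univ x)
    linarith
  have hd : ∀ w, 0 < ColSum Q w := by
    intro w
    obtain ⟨x, hx⟩ := hQnz w
    have hpos : 0 < Q x w := lt_of_le_of_ne (hQ0 x w) (Ne.symm hx)
    have hle : Q x w ≤ ColSum Q w :=
      Finset.single_le_sum (fun i _ => hQ0 i w) (Finset.mem_univ x)
    linarith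
  -- separating functional on normalized columns
  set uf : Fin ℓ → (Fin n → ℝ) := fun y => fun x => (ColSum P y)⁻¹ * P x y with huf
  set vf : Fin m → (Fin n → ℝ) := fun w => fun x => (ColSum Q w)⁻¹ * Q x w with hvf
  set V : Finset (Fin n → ℝ) :=
    (Finset.univ.image uf) ∪ (Finset.univ.image vf) with hV
  obtain ⟨a, hsep⟩ := exists_sep V
  have hufmem : ∀ y, uf y ∈ V := fun y =>
    Finset.mem_union_left _ (Finset.mem_image.mpr ⟨y, Finset.mem_univ y, rfl⟩)
  have hvfmem : ∀ w, vf w ∈ V := fun w =>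
    Finset.mem_union_right _ (Finset.mem_image.mpr ⟨w, Finset.mem_univ w, rfl⟩)
  have hu : ∀ y y' : Fin ℓ, (ColSum P y)⁻¹ * dotR a (fun x => P x y)
      = (ColSum P y')⁻¹ * dotR a (fun x => P x y') → y = y' := by
    intro y y' h
    have h' : dotR a (uf y) = dotR a (uf y') := by
      rw [huf]
      rw [dotR_mul_left a (fun x => P x y) (ColSum P y)⁻¹,
        dotR_mul_left a (fun x => P x y') (ColSum P y')⁻¹]
      exact h
    have heqv : uf y = uf y' := by
      by_contra hne
      exact hsep _ (hufmem y) _ (hufmem y') hne h'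
    by_contra hne
    refine hPprop y y' hne (ColSum P y * (ColSum P y')⁻¹)
      (mul_nonneg (hc y).le (inv_nonneg.mpr (hc y').le)) (fun x => ?_)
    have hx : (ColSum P y)⁻¹ * P x y = (ColSum P y')⁻¹ * P x y' := congrFun heqv x
    calc P x y = ColSum P y * ((ColSum P y)⁻¹ * P x y) := by
          rw [← mul_assoc, mul_inv_cancel₀ (hc y).ne', one_mul]
      _ = ColSum P y * ((ColSum P y')⁻¹ * P x y') := by rw [hx]
      _ = ColSum P y * (ColSum P y')⁻¹ * P x y' := by ring
  have hv : ∀ w w' : Fin m, (ColSum Q w)⁻¹ * dotR a (fun x => Q x w)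
      = (ColSum Q w')⁻¹ * dotR a (fun x => Q x w') → w = w' := by
    intro w w' h
    have h' : dotR a (vf w) = dotR a (vf w') := by
      rw [hvf]
      rw [dotR_mul_left a (fun x => Q x w) (ColSum Q w)⁻¹,
        dotR_mul_left a (fun x => Q x w') (ColSum Q w')⁻¹]
      exact h
    have heqv : vf w = vf w' := by
      by_contra hne
      exact hsep _ (hvfmem w) _ (hvfmem w') hne h'
    by_contra hne
    refine hQprop w w' hne (ColSum Q w * (ColSum Q w')⁻¹)
      (mul_nonneg (hd w).le (inv_nonneg.mpr (hd w').le)) (fun x => ?_)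
    have hx : (ColSum Q w)⁻¹ * Q x w = (ColSum Q w')⁻¹ * Q x w' := congrFun heqv x
    calc Q x w = ColSum Q w * ((ColSum Q w)⁻¹ * Q x w) := by
          rw [← mul_assoc, mul_inv_cancel₀ (hd w).ne', one_mul]
      _ = ColSum Q w * ((ColSum Q w')⁻¹ * Q x w') := by rw [hx]
      _ = ColSum Q w * (ColSum Q w')⁻¹ * Q x w' := by ring
  obtain ⟨hA, hB⟩ := peel P Q S S' a hSrs.1 hS'rs.1 hc hd hu hv
    (Finset.univ : Finset (Fin ℓ)).card Finset.univ Finset.univ rfl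
    (fun w _ x => hQP x w) (fun y _ x => hPQ x y)
    (fun y _ => hSrs.2 y) (fun w _ => hS'rs.2 w)
  have hPcolinj : ∀ y y' : Fin ℓ, (∀ x, P x y = P x y') → y = y' := by
    intro y y' hcol
    by_contra hne
    exact hPprop y y' hne 1 zero_le_one (fun x => by rw [one_mul]; exact hcol x)
  have hQcolinj : ∀ w w' : Fin m, (∀ x, Q x w = Q x w') → w = w' := by
    intro w w' hcol
    by_contra hne
    exact hQprop w w' hne 1 zero_le_one (fun x => by rw [one_mul]; exact hcol x)
  have hBex : ∀ y : Fin ℓ, ∃ w, ∀ x, P x y = Q x w := by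
    intro y
    obtain ⟨w, -, h⟩ := hB y (Finset.mem_univ y)
    exact ⟨w, h⟩
  have hAex : ∀ w : Fin m, ∃ y, ∀ x, Q x w = P x y := by
    intro w
    obtain ⟨y, -, h⟩ := hA w (Finset.mem_univ w)
    exact ⟨y, h⟩
  choose g hg using hBex
  choose g' hg' using hAex
  have hginj : Function.Injective g := by
    intro y y' he
    exact hPcolinj y y' (fun x => by rw [hg y x, hg y' x, he])
  have hg'inj : Function.Injective g' := by
    intro w w' he
    exact hQcolinj w w' (fun x => by rw [hg' w x, hg' w' x, he])
  have hlm : ℓ = m := by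
    have h1' := Fintype.card_le_of_injective g hginj
    have h2' := Fintype.card_le_of_injective g' hg'inj
    simpa using le_antisymm (by simpa using h1') (by simpa using h2')
  subst hlm
  refine ⟨rfl, heq_of_eq ?_⟩
  have hcolsum : ∀ y, ColSum Q (g y) = ColSum P y := fun y =>
    Finset.sum_congr rfl fun x _ => (hg y x).symm
  have hpartsum : ∀ k y, PartSum Q k (g y) = PartSum P k y := fun k y =>
    Finset.sum_congr rfl fun x _ => (hg y x).symm
  have hmono : StrictMono g := by
    intro y y' hlt
    rcases lt_trichotomy (g y) (g y') with h | h | h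
    · exact h
    · exact absurd (hginj h) (ne_of_lt hlt)
    · exfalso
      have relP := hPord y y' hlt
      have relQ := hQord (g y') (g y) h
      simp only [hcolsum, hpartsum] at relQ
      exact cond4_asymm (ColSum P y) (ColSum P y')
        (fun k => PartSum P k y) (fun k => PartSum P k y') relP relQ
  have hid := strictMono_fin_id _ g hmono
  ext x y
  rw [hg y x, hid y]
end

section
/- Let P (n×ℓ) and Q (n×m) be joint probability matrices. Q ≺_c P if and only if for every n×m matrix A = [a₁,...,a_m] with nonnegative entries, Σ_{y=1}^ℓ p_y Φ_A(p^{|y}) ≥ Σ_{w=1}^m q_w Φ_A(q^{|w}), where Φ_A(v) = max_{w ≤ m} (a_w↓)ᵀ v↓, with v↓ denoting the nonincreasing rearrangement of the vector v. -/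
open Matrix Finset

/-- Nonincreasing rearrangement of a vector. -/
noncomputable def sortDesc {n : ℕ} (u : Fin n → ℝ) : Fin n → ℝ :=
  fun i => u (Tuple.sort (fun j => -u j) i)

/-- Sum of the `k` largest entries of `u`. -/
noncomputable def pSumDesc {n : ℕ} (u : Fin n → ℝ) (k : ℕ) : ℝ :=
  ∑ i ∈ Finset.univ.filter (fun i : Fin n => (i : ℕ) < k), sortDesc u i

/-- `Majorizes u v` means `u ≻ v`: all partial sums of the sorted `u` dominate
those of `v`, and the total sums coincide. -/
def Majorizes {n : ℕ} (u v : Fin n → ℝ) : Prop :=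
  (∀ k : ℕ, pSumDesc v k ≤ pSumDesc u k) ∧ ∑ i, u i = ∑ i, v i

/-- `Φ_A(v) = max_w (a_w↓)ᵀ v↓`. -/
noncomputable def PhiA {n m : ℕ} (A : Matrix (Fin n) (Fin (m + 1)) ℝ) (v : Fin n → ℝ) : ℝ :=
  Finset.univ.sup' Finset.univ_nonempty
    (fun w : Fin (m + 1) => ∑ i, sortDesc (fun x => A x w) i * sortDesc v i)


lemma sortDesc_antitone {n : ℕ} (u : Fin n → ℝ) : Antitone (sortDesc u) := by
  have h := Tuple.monotone_sort (fun j => -u j)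
  intro i j hij
  have := h hij
  simp only [Function.comp] at this
  simpa [sortDesc] using this

lemma monovary_sortDesc {n : ℕ} (a v : Fin n → ℝ) :
    Monovary (sortDesc a) (sortDesc v) := by
  intro i j hij
  rcases le_or_gt j i with h | h
  · exact sortDesc_antitone a h
  · exact absurd (sortDesc_antitone v h.le) (not_le.2 hij)

/-- Rearrangement: the sorted dot product is the max over permutations. -/
lemma dot_sorted_eq_sup {n : ℕ} (a v : Fin n → ℝ) :
    ∑ i, sortDesc a i * sortDesc v i
      = (Finset.univ : Finset (Equiv.Perm (Fin n))).sup' Finset.univ_nonempty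
          (fun σ => ∑ i, a i * v (σ i)) := by
  set τa := Tuple.sort (fun j => -a j) with hτa
  set τv := Tuple.sort (fun j => -v j) with hτv
  apply le_antisymm
  · have h := Finset.le_sup' (f := fun σ : Equiv.Perm (Fin n) => ∑ i, a i * v (σ i))
      (b := τa.symm.trans τv) (Finset.mem_univ _)
    refine le_trans (le_of_eq ?_) h
    rw [← Equiv.sum_comp τa (fun i => a i * v ((τa.symm.trans τv) i))]
    simp [sortDesc, Equiv.trans_apply]
    rfl
  · apply Finset.sup'_le
    intro σ _
    have key : ∑ i, a i * v (σ i)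
        = ∑ j, sortDesc a j * sortDesc v ((τa.trans (σ.trans τv.symm)) j) := by
      rw [← Equiv.sum_comp τa (fun i => a i * v (σ i))]
      apply Finset.sum_congr rfl
      intro j _
      simp [sortDesc, Equiv.trans_apply]
      rw [← hτa, ← hτv]; simp
    rw [key]
    exact (monovary_sortDesc a v).sum_mul_comp_perm_le_sum_mul

/-- `Φ_A` as a max of linear functionals. -/
noncomputable def phiP {n m : ℕ} (A : Matrix (Fin n) (Fin (m + 1)) ℝ) (v : Fin n → ℝ) : ℝ :=
  (Finset.univ : Finset (Fin (m + 1) × Equiv.Perm (Fin n))).sup' Finset.univ_nonempty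
    (fun p => ∑ i, A i p.1 * v (p.2 i))

lemma phiA_eq_phiP {n m : ℕ} (A : Matrix (Fin n) (Fin (m + 1)) ℝ) (v : Fin n → ℝ) :
    PhiA A v = phiP A v := by
  unfold PhiA phiP
  apply le_antisymm
  · apply Finset.sup'_le
    intro w _
    rw [dot_sorted_eq_sup]
    apply Finset.sup'_le
    intro σ _
    exact Finset.le_sup' (f := fun p : Fin (m+1) × Equiv.Perm (Fin n) => ∑ i, A i p.1 * v (p.2 i))
      (b := (w, σ)) (Finset.mem_univ _)
  · apply Finset.sup'_le
    intro p _
    have h1 : ∑ i, A i p.1 * v (p.2 i)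
        ≤ ∑ i, sortDesc (fun x => A x p.1) i * sortDesc v i := by
      rw [dot_sorted_eq_sup]
      exact Finset.le_sup' (f := fun σ : Equiv.Perm (Fin n) => ∑ i, A i p.1 * v (σ i))
        (b := p.2) (Finset.mem_univ _)
    exact h1.trans (Finset.le_sup'
      (f := fun w => ∑ i, sortDesc (fun x => A x w) i * sortDesc v i) (Finset.mem_univ p.1))

lemma phiP_le {n m : ℕ} {A : Matrix (Fin n) (Fin (m + 1)) ℝ} {v : Fin n → ℝ} {c : ℝ}
    (h : ∀ (w : Fin (m+1)) (σ : Equiv.Perm (Fin n)), ∑ i, A i w * v (σ i) ≤ c) :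
    phiP A v ≤ c :=
  Finset.sup'_le _ _ fun p _ => h p.1 p.2

lemma le_phiP {n m : ℕ} (A : Matrix (Fin n) (Fin (m + 1)) ℝ) (v : Fin n → ℝ)
    (w : Fin (m+1)) (σ : Equiv.Perm (Fin n)) :
    ∑ i, A i w * v (σ i) ≤ phiP A v :=
  Finset.le_sup' (f := fun p : Fin (m+1) × Equiv.Perm (Fin n) => ∑ i, A i p.1 * v (p.2 i))
    (b := (w, σ)) (Finset.mem_univ _)

lemma phiP_exists {n m : ℕ} (A : Matrix (Fin n) (Fin (m + 1)) ℝ) (v : Fin n → ℝ) :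
    ∃ (w : Fin (m+1)) (σ : Equiv.Perm (Fin n)), phiP A v = ∑ i, A i w * v (σ i) := by
  obtain ⟨p, -, hp⟩ := Finset.exists_mem_eq_sup' (s := (Finset.univ : Finset (Fin (m + 1) × Equiv.Perm (Fin n)))) Finset.univ_nonempty (fun p => ∑ i, A i p.1 * v (p.2 i))
  exact ⟨p.1, p.2, hp⟩

lemma phiP_zero {n m : ℕ} (A : Matrix (Fin n) (Fin (m + 1)) ℝ) :
    phiP A (fun _ => (0:ℝ)) = 0 := by
  obtain ⟨w, σ, h⟩ := phiP_exists A (fun _ => (0:ℝ))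
  simp [h]

lemma phiP_smul {n m : ℕ} (A : Matrix (Fin n) (Fin (m + 1)) ℝ) (v : Fin n → ℝ) {c : ℝ}
    (hc : 0 ≤ c) : phiP A (fun x => c * v x) = c * phiP A v := by
  apply le_antisymm
  · apply phiP_le
    intro w σ
    calc ∑ i, A i w * (c * v (σ i)) = c * ∑ i, A i w * v (σ i) := by
          rw [Finset.mul_sum]; congr 1; ext i; ring
      _ ≤ c * phiP A v := mul_le_mul_of_nonneg_left (le_phiP A v w σ) hc
  · obtain ⟨w, σ, h⟩ := phiP_exists A v
    rw [h]
    have : c * ∑ i, A i w * v (σ i) = ∑ i, A i w * (c * v (σ i)) := by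
      rw [Finset.mul_sum]; congr 1; ext i; ring
    rw [this]
    exact le_phiP A (fun x => c * v x) w σ

/-- superposition bound -/
lemma phiP_sum_le {n m ℓ : ℕ} (A : Matrix (Fin n) (Fin (m + 1)) ℝ)
    (f : Fin ℓ → Fin n → ℝ) :
    phiP A (fun x => ∑ y, f y x) ≤ ∑ y, phiP A (f y) := by
  apply phiP_le
  intro w σ
  have : ∑ i, A i w * (∑ y, f y (σ i)) = ∑ y, ∑ i, A i w * f y (σ i) := by
    rw [Finset.sum_comm]
    apply Finset.sum_congr rfl
    intro i _
    rw [Finset.mul_sum]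
  rw [this]
  exact Finset.sum_le_sum fun y _ => le_phiP A (f y) w σ

lemma phiP_shift {n m : ℕ} (A : Matrix (Fin n) (Fin (m + 1)) ℝ) (v : Fin n → ℝ) (c : ℝ) :
    phiP (fun x w => A x w + c) v = phiP A v + c * ∑ x, v x := by
  apply le_antisymm
  · apply phiP_le
    intro w σ
    have : ∑ i, (A i w + c) * v (σ i) = (∑ i, A i w * v (σ i)) + c * ∑ x, v x := by
      rw [← Equiv.sum_comp σ v, Finset.mul_sum, ← Finset.sum_add_distrib]
      apply Finset.sum_congr rfl; intro i _; ring
    rw [this]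
    linarith [le_phiP A v w σ]
  · obtain ⟨w, σ, h⟩ := phiP_exists A v
    rw [h]
    have : (∑ i, A i w * v (σ i)) + c * ∑ x, v x = ∑ i, (A i w + c) * v (σ i) := by
      rw [← Equiv.sum_comp σ v, Finset.mul_sum, ← Finset.sum_add_distrib]
      apply Finset.sum_congr rfl; intro i _; ring
    rw [this]
    exact le_phiP (fun x w => A x w + c) v w σ

/-- contraction by doubly stochastic matrices, via Birkhoff -/
lemma phiP_dstoch_le {n m : ℕ} (A : Matrix (Fin n) (Fin (m + 1)) ℝ)
    (E : Matrix (Fin n) (Fin n) ℝ) (hE : (∀ i j, 0 ≤ E i j) ∧ (∀ i, ∑ j, E i j = 1) ∧ (∀ j, ∑ i, E i j = 1))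
    (u : Fin n → ℝ) :
    phiP A (fun x => ∑ x', E x x' * u x') ≤ phiP A u := by
  have hmem : E ∈ doublyStochastic ℝ (Fin n) := by
    rw [mem_doublyStochastic_iff_sum]
    exact hE
  obtain ⟨cw, hcw0, hcw1, hcwE⟩ := exists_eq_sum_perm_of_mem_doublyStochastic hmem
  have hvec : ∀ x, ∑ x', E x x' * u x' = ∑ π : Equiv.Perm (Fin n), cw π * u (π x) := by
    intro x
    rw [← hcwE]
    simp only [Matrix.sum_apply, Matrix.smul_apply, Equiv.Perm.permMatrix,
      PEquiv.toMatrix_apply, Equiv.toPEquiv_apply, Option.mem_def, Option.some.injEq,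
      smul_eq_mul, mul_ite, mul_one, mul_zero, Finset.sum_ite_eq', Finset.mem_univ, if_true]
    simp only [Finset.sum_mul, ite_mul, zero_mul]
    rw [Finset.sum_comm]
    simp
  apply phiP_le
  intro w σ
  calc ∑ i, A i w * (∑ x', E (σ i) x' * u x')
      = ∑ π : Equiv.Perm (Fin n), cw π * ∑ i, A i w * u (π (σ i)) := by
        simp only [hvec, Finset.mul_sum]
        rw [Finset.sum_comm]
        apply Finset.sum_congr rfl
        intro π _
        apply Finset.sum_congr rfl
        intro i _
        ring
    _ ≤ ∑ π : Equiv.Perm (Fin n), cw π * phiP A u := by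
        apply Finset.sum_le_sum
        intro π _
        exact mul_le_mul_of_nonneg_left (le_phiP A u w (σ.trans π)) (hcw0 π)
    _ = phiP A u := by rw [← Finset.sum_mul, hcw1, one_mul]

lemma phiP_col {n m : ℕ} (A : Matrix (Fin n) (Fin (m + 1)) ℝ) (u : Fin n → ℝ)
    (hu : ∀ x, 0 ≤ u x) :
    (∑ x, u x) * PhiA A (fun x => u x / ∑ x, u x) = phiP A u := by
  rcases eq_or_lt_of_le (Finset.sum_nonneg fun x _ => hu x) with hs | hs
  · have hu0 : u = fun _ => 0 := by
      funext x
      exact le_antisymm (by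
        have := Finset.single_le_sum (f := u) (fun x _ => hu x) (Finset.mem_univ x)
        linarith [this]) (hu x)
    rw [hu0, phiP_zero]
    simp
  · have hs' : (∑ x, u x) ≠ 0 := ne_of_gt hs
    have : (fun x => u x / ∑ x, u x) = fun x => (∑ x, u x)⁻¹ * u x := by
      funext x; rw [div_eq_inv_mul]
    rw [this, phiA_eq_phiP, phiP_smul A u (inv_nonneg.2 hs.le), ← mul_assoc,
      mul_inv_cancel₀ hs', one_mul]

/-- Structured representation of `CondMaj`. -/
def RepK {n ℓ m : ℕ} (P : Matrix (Fin n) (Fin ℓ) ℝ)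
    (X : Fin n → Fin (m + 1) → ℝ) : Prop :=
  ∃ (s : Fin ℓ → Fin (m + 1) → ℝ) (E : Fin ℓ → Fin (m + 1) → Matrix (Fin n) (Fin n) ℝ),
    (∀ y w, 0 ≤ s y w) ∧ (∀ y, ∑ w, s y w = 1) ∧ (∀ y w, DStoch (E y w)) ∧
    ∀ x w, X x w = ∑ y, s y w * ∑ x', E y w x x' * P x' y

lemma condmaj_of_rep {n ℓ m : ℕ} {P : Matrix (Fin n) (Fin ℓ) ℝ}
    {Q : Matrix (Fin n) (Fin (m + 1)) ℝ} (h : RepK P (fun x w => Q x w)) : CondMaj P Q := by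
  obtain ⟨s, E, hs0, hs1, hE, hX⟩ := h
  classical
  set R : Fin (ℓ * (m+1)) → Matrix (Fin ℓ) (Fin (m+1)) ℝ :=
    fun j => Matrix.of fun y w => if finProdFinEquiv (y, w) = j then s y w else 0 with hR
  have hRapp : ∀ j y w, R j y w = if finProdFinEquiv (y, w) = j then s y w else 0 := by
    intro j y w; rfl
  have hRsum : ∀ y w, (∑ j, R j) y w = s y w := by
    intro y w
    rw [Matrix.sum_apply]
    have : ∀ j, R j y w = if finProdFinEquiv (y, w) = j then s y w else 0 := fun j => rfl
    rw [Finset.sum_congr rfl (fun j _ => this j)]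
    rw [Finset.sum_ite_eq (Finset.univ : Finset (Fin (ℓ * (m+1)))) (finProdFinEquiv (y, w))]
    simp
  refine ⟨ℓ * (m + 1), fun j => E (finProdFinEquiv.symm j).1 (finProdFinEquiv.symm j).2,
    R, fun j => hE _ _, fun j y w => ?_, ⟨fun y w => ?_, fun y => ?_⟩, ?_⟩
  · rw [hRapp]; split
    · exact hs0 y w
    · exact le_refl 0
  · rw [hRsum]; exact hs0 y w
  · rw [Finset.sum_congr rfl (fun w (_ : w ∈ Finset.univ) => hRsum y w)]
    exact hs1 y
  · funext x w
    rw [Matrix.sum_apply]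
    have hXx : Q x w = ∑ y, s y w * ∑ x', E y w x x' * P x' y := hX x w
    rw [hXx]
    have key : ∀ j : Fin (ℓ * (m+1)),
        (E (finProdFinEquiv.symm j).1 (finProdFinEquiv.symm j).2 * P * R j) x w
        = ∑ y, (if finProdFinEquiv (y, w) = j then
            s y w * ∑ x', E (finProdFinEquiv.symm j).1 (finProdFinEquiv.symm j).2 x x' * P x' y else 0) := by
      intro j
      rw [Matrix.mul_apply]
      apply Finset.sum_congr rfl
      intro y _
      rw [Matrix.mul_apply, hRapp]
      split
      · rw [mul_comm]
      · ring
    rw [Finset.sum_congr rfl (fun j _ => key j), Finset.sum_comm]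
    apply Finset.sum_congr rfl
    intro y _
    rw [Finset.sum_ite_eq (Finset.univ : Finset (Fin (ℓ * (m+1)))) (finProdFinEquiv (y, w))]
    simp only [Finset.mem_univ, if_true, Equiv.symm_apply_apply]

lemma repK_of_condmaj {n ℓ m : ℕ} {P : Matrix (Fin n) (Fin ℓ) ℝ}
    {Q : Matrix (Fin n) (Fin (m + 1)) ℝ} (h : CondMaj P Q) : RepK P (fun x w => Q x w) := by
  obtain ⟨J, D, R, hD, hR0, ⟨hS0, hS1⟩, hQE⟩ := h
  classical
  set s : Fin ℓ → Fin (m+1) → ℝ := fun y w => ∑ j, R j y w with hs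
  have hs0 : ∀ y w, 0 ≤ s y w := fun y w => Finset.sum_nonneg fun j _ => hR0 j y w
  have hs1 : ∀ y, ∑ w, s y w = 1 := by
    intro y
    have := hS1 y
    rw [← this]
    apply Finset.sum_congr rfl
    intro w _
    rw [Matrix.sum_apply]
  have hRz : ∀ y w, s y w = 0 → ∀ j, R j y w = 0 := by
    intro y w h0 j
    have h1 := Finset.sum_nonneg (fun j (_ : j ∈ Finset.univ) => hR0 j y w)
    have := Finset.single_le_sum (fun j (_ : j ∈ Finset.univ) => hR0 j y w) (Finset.mem_univ j)
    have h2 : (∑ j, R j y w) = 0 := h0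
    linarith [hR0 j y w]
  set E : Fin ℓ → Fin (m+1) → Matrix (Fin n) (Fin n) ℝ := fun y w =>
    if s y w = 0 then (1 : Matrix (Fin n) (Fin n) ℝ)
    else Matrix.of fun x x' => (s y w)⁻¹ * ∑ j, R j y w * D j x x' with hEdef
  refine ⟨s, E, hs0, hs1, fun y w => ?_, fun x w => ?_⟩
  · by_cases h0 : s y w = 0
    · rw [hEdef]
      simp only [h0, if_true]
      refine ⟨fun i j => ?_, fun i => ?_, fun j => ?_⟩
      · rw [Matrix.one_apply]; split <;> norm_num
      · simp [Matrix.one_apply]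
      · simp [Matrix.one_apply]
    · have hsp : 0 < s y w := lt_of_le_of_ne (hs0 y w) (Ne.symm h0)
      have hEapp : ∀ x x', E y w x x' = (s y w)⁻¹ * ∑ j, R j y w * D j x x' := by
        intro x x'
        rw [hEdef]
        simp only [h0, if_false]
        rfl
      refine ⟨fun i j => ?_, fun i => ?_, fun j => ?_⟩
      · rw [hEapp]
        exact mul_nonneg (inv_nonneg.2 hsp.le)
          (Finset.sum_nonneg fun j _ => mul_nonneg (hR0 _ _ _) ((hD j).1 _ _))
      · rw [Finset.sum_congr rfl (fun j (_ : j ∈ Finset.univ) => hEapp i j), ← Finset.mul_sum,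
          Finset.sum_comm]
        have : ∀ j, ∑ x', R j y w * D j i x' = R j y w := by
          intro j
          rw [← Finset.mul_sum, (hD j).2.1 i, mul_one]
        rw [Finset.sum_congr rfl (fun j _ => this j)]
        exact inv_mul_cancel₀ h0
      · rw [Finset.sum_congr rfl (fun i (_ : i ∈ Finset.univ) => hEapp i j), ← Finset.mul_sum,
          Finset.sum_comm]
        have : ∀ k, ∑ i, R k y w * D k i j = R k y w := by
          intro k
          rw [← Finset.mul_sum, (hD k).2.2 j, mul_one]
        rw [Finset.sum_congr rfl (fun k _ => this k)]
        exact inv_mul_cancel₀ h0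
  · have hQxw : Q x w = ∑ j, ∑ y, (∑ x', D j x x' * P x' y) * R j y w := by
      rw [hQE]
      rw [Matrix.sum_apply]
      apply Finset.sum_congr rfl
      intro j _
      rw [Matrix.mul_apply]
      apply Finset.sum_congr rfl
      intro y _
      rw [Matrix.mul_apply]
    show Q x w = _
    rw [hQxw, Finset.sum_comm]
    apply Finset.sum_congr rfl
    intro y _
    by_cases h0 : s y w = 0
    · rw [h0, zero_mul]
      apply Finset.sum_eq_zero
      intro j _
      rw [hRz y w h0 j, mul_zero]
    · have hEapp : ∀ x x', E y w x x' = (s y w)⁻¹ * ∑ j, R j y w * D j x x' := by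
        intro x x'
        rw [hEdef]
        simp only [h0, if_false]
        rfl
      rw [Finset.sum_congr rfl (fun x' (_ : x' ∈ Finset.univ) =>
        by rw [hEapp x x'] : ∀ x' ∈ Finset.univ, E y w x x' * P x' y
          = ((s y w)⁻¹ * ∑ j, R j y w * D j x x') * P x' y)]
      have : ∑ x', ((s y w)⁻¹ * ∑ j, R j y w * D j x x') * P x' y
          = (s y w)⁻¹ * ∑ j, (∑ x', D j x x' * P x' y) * R j y w := by
        calc ∑ x', ((s y w)⁻¹ * ∑ j, R j y w * D j x x') * P x' y
            = ∑ x', ∑ j, (s y w)⁻¹ * (R j y w * (D j x x' * P x' y)) := by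
              apply Finset.sum_congr rfl
              intro x' _
              simp only [Finset.mul_sum, Finset.sum_mul]
              apply Finset.sum_congr rfl
              intro j _
              ring
          _ = ∑ j, ∑ x', (s y w)⁻¹ * (R j y w * (D j x x' * P x' y)) := Finset.sum_comm
          _ = (s y w)⁻¹ * ∑ j, (∑ x', D j x x' * P x' y) * R j y w := by
              rw [Finset.mul_sum]
              apply Finset.sum_congr rfl
              intro j _
              simp only [Finset.mul_sum, Finset.sum_mul]
              apply Finset.sum_congr rfl
              intro x' _
              ring
      rw [this, ← mul_assoc, mul_inv_cancel₀ h0, one_mul]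

lemma forward_ineq {n ℓ m : ℕ} {P : Matrix (Fin n) (Fin ℓ) ℝ}
    {Q : Matrix (Fin n) (Fin (m + 1)) ℝ}
    (hP : JointProb P) (hQ : JointProb Q) (h : RepK P (fun x w => Q x w))
    (A : Matrix (Fin n) (Fin (m + 1)) ℝ) :
    ∑ w, ColSum Q w * PhiA A (fun x => Q x w / ColSum Q w) ≤
      ∑ y, ColSum P y * PhiA A (fun x => P x y / ColSum P y) := by
  obtain ⟨s, E, hs0, hs1, hE, hX⟩ := h
  have hQcol : ∀ w, ColSum Q w * PhiA A (fun x => Q x w / ColSum Q w)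
      = phiP A (fun x => Q x w) := fun w => phiP_col A (fun x => Q x w) (fun x => hQ.1 x w)
  have hPcol : ∀ y, ColSum P y * PhiA A (fun x => P x y / ColSum P y)
      = phiP A (fun x => P x y) := fun y => phiP_col A (fun x => P x y) (fun x => hP.1 x y)
  rw [Finset.sum_congr rfl (fun w _ => hQcol w), Finset.sum_congr rfl (fun y _ => hPcol y)]
  have step : ∀ w, phiP A (fun x => Q x w) ≤ ∑ y, s y w * phiP A (fun x => P x y) := by
    intro w
    have h1 : (fun x => Q x w) = fun x => ∑ y, s y w * ∑ x', E y w x x' * P x' y := by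
      funext x; exact hX x w
    rw [h1]
    refine le_trans (phiP_sum_le A (fun y x => s y w * ∑ x', E y w x x' * P x' y)) ?_
    apply Finset.sum_le_sum
    intro y _
    rw [phiP_smul A _ (hs0 y w)]
    exact mul_le_mul_of_nonneg_left (phiP_dstoch_le A (E y w) (hE y w) (fun x' => P x' y))
      (hs0 y w)
  refine le_trans (Finset.sum_le_sum fun w (_ : w ∈ Finset.univ) => step w) ?_
  rw [Finset.sum_comm]
  apply le_of_eq
  apply Finset.sum_congr rfl
  intro y _
  rw [← Finset.sum_mul, hs1 y, one_mul]

/-- The parameter set for the representation. -/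
def Sset (n ℓ m : ℕ) :
    Set ((Fin ℓ → Fin (m+1) → ℝ) × (Fin ℓ → Fin (m+1) → Fin n → Fin n → ℝ)) :=
  {p | (∀ y w, 0 ≤ p.1 y w) ∧ (∀ y, ∑ w, p.1 y w = 1) ∧
    ∀ y w, (∀ i j, 0 ≤ p.2 y w i j) ∧ (∀ i, ∑ j, p.2 y w i j = 1) ∧
      (∀ j, ∑ i, p.2 y w i j = 1)}

noncomputable def psiK {n ℓ m : ℕ} (P : Matrix (Fin n) (Fin ℓ) ℝ)
    (p : (Fin ℓ → Fin (m+1) → ℝ) × (Fin ℓ → Fin (m+1) → Fin n → Fin n → ℝ)) :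
    Fin n → Fin (m+1) → ℝ :=
  fun x w => ∑ y, p.1 y w * ∑ x', p.2 y w x x' * P x' y

noncomputable def Kset {n ℓ : ℕ} (m : ℕ) (P : Matrix (Fin n) (Fin ℓ) ℝ) :
    Set (Fin n → Fin (m+1) → ℝ) :=
  psiK P '' Sset n ℓ m

lemma repK_iff_mem {n ℓ m : ℕ} (P : Matrix (Fin n) (Fin ℓ) ℝ)
    (X : Fin n → Fin (m+1) → ℝ) : RepK P X ↔ X ∈ Kset m P := by
  constructor
  · rintro ⟨s, E, hs0, hs1, hE, hX⟩
    refine ⟨(s, fun y w => E y w), ⟨hs0, hs1, fun y w => hE y w⟩, ?_⟩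
    funext x w
    exact (hX x w).symm
  · rintro ⟨p, ⟨h1, h2, h3⟩, rfl⟩
    exact ⟨p.1, fun y w => p.2 y w, h1, h2, fun y w => h3 y w, fun x w => rfl⟩

lemma convex_Kset {n ℓ m : ℕ} (P : Matrix (Fin n) (Fin ℓ) ℝ) :
    Convex ℝ (Kset m P) := by
  rintro X1 ⟨p, ⟨hp0, hp1, hp2⟩, rfl⟩ X2 ⟨q, ⟨hq0, hq1, hq2⟩, rfl⟩ a b ha hb hab
  classical
  set s : Fin ℓ → Fin (m+1) → ℝ := fun y w => a * p.1 y w + b * q.1 y w with hsdef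
  set E : Fin ℓ → Fin (m+1) → Fin n → Fin n → ℝ := fun y w =>
    if s y w = 0 then (fun i j => if i = j then 1 else 0)
    else fun i j => (s y w)⁻¹ * (a * p.1 y w * p.2 y w i j + b * q.1 y w * q.2 y w i j)
    with hEdef
  have hsnn : ∀ y w, 0 ≤ s y w := fun y w =>
    add_nonneg (mul_nonneg ha (hp0 y w)) (mul_nonneg hb (hq0 y w))
  have hzero : ∀ y w, s y w = 0 → a * p.1 y w = 0 ∧ b * q.1 y w = 0 := by
    intro y w h0
    have h0' : a * p.1 y w + b * q.1 y w = 0 := h0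
    have h1 : 0 ≤ a * p.1 y w := mul_nonneg ha (hp0 y w)
    have h2 : 0 ≤ b * q.1 y w := mul_nonneg hb (hq0 y w)
    constructor <;> linarith
  refine ⟨(s, E), ⟨hsnn, ?_, ?_⟩, ?_⟩
  · intro y
    show ∑ w, (a * p.1 y w + b * q.1 y w) = 1
    rw [Finset.sum_add_distrib, ← Finset.mul_sum, ← Finset.mul_sum, hp1 y, hq1 y]
    simpa using hab
  · intro y w
    show (∀ i j, 0 ≤ E y w i j) ∧ (∀ i, ∑ j, E y w i j = 1) ∧ (∀ j, ∑ i, E y w i j = 1)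
    by_cases h0 : s y w = 0
    · have hE1 : E y w = fun i j => if i = j then 1 else 0 := by
        rw [hEdef]; simp only [h0, if_true]
      rw [hE1]
      refine ⟨fun i j => by dsimp only; split <;> norm_num, fun i => by simp, fun j => ?_⟩
      simp [eq_comm]
    · have hsp : 0 < s y w := lt_of_le_of_ne (hsnn y w) (Ne.symm h0)
      have hE1 : E y w = fun i j =>
          (s y w)⁻¹ * (a * p.1 y w * p.2 y w i j + b * q.1 y w * q.2 y w i j) := by
        rw [hEdef]; simp only [h0, if_false]
      rw [hE1]
      refine ⟨fun i j => ?_, fun i => ?_, fun j => ?_⟩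
      · exact mul_nonneg (inv_nonneg.2 hsp.le) (add_nonneg
          (mul_nonneg (mul_nonneg ha (hp0 y w)) ((hp2 y w).1 i j))
          (mul_nonneg (mul_nonneg hb (hq0 y w)) ((hq2 y w).1 i j)))
      · rw [← Finset.mul_sum, Finset.sum_add_distrib, ← Finset.mul_sum, ← Finset.mul_sum,
          (hp2 y w).2.1 i, (hq2 y w).2.1 i, mul_one, mul_one]
        exact inv_mul_cancel₀ h0
      · rw [← Finset.mul_sum, Finset.sum_add_distrib, ← Finset.mul_sum, ← Finset.mul_sum,
          (hp2 y w).2.2 j, (hq2 y w).2.2 j, mul_one, mul_one]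
        exact inv_mul_cancel₀ h0
  · funext x w
    show ∑ y, s y w * ∑ x', E y w x x' * P x' y = (a • psiK P p + b • psiK P q) x w
    have hR : (a • psiK P p + b • psiK P q) x w
        = ∑ y, (a * (p.1 y w * ∑ x', p.2 y w x x' * P x' y)
            + b * (q.1 y w * ∑ x', q.2 y w x x' * P x' y)) := by
      show a * psiK P p x w + b * psiK P q x w = _
      rw [Finset.sum_add_distrib, ← Finset.mul_sum, ← Finset.mul_sum]
      rfl
    rw [hR]
    apply Finset.sum_congr rfl
    intro y _
    by_cases h0 : s y w = 0
    · obtain ⟨hz1, hz2⟩ := hzero y w h0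
      rw [h0, zero_mul, ← mul_assoc, ← mul_assoc, hz1, hz2, zero_mul, zero_mul, add_zero]
    · have hE1 : ∀ i j, E y w i j
          = (s y w)⁻¹ * (a * p.1 y w * p.2 y w i j + b * q.1 y w * q.2 y w i j) := by
        intro i j
        rw [hEdef]
        simp only [h0, if_false]
      calc s y w * ∑ x', E y w x x' * P x' y
          = ∑ x', (a * p.1 y w * p.2 y w x x' + b * q.1 y w * q.2 y w x x') * P x' y := by
            rw [Finset.mul_sum]
            apply Finset.sum_congr rfl
            intro x' _
            rw [hE1 x x', ← mul_assoc, ← mul_assoc, mul_inv_cancel₀ h0, one_mul]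
      _ = a * (p.1 y w * ∑ x', p.2 y w x x' * P x' y)
            + b * (q.1 y w * ∑ x', q.2 y w x x' * P x' y) := by
            rw [Finset.mul_sum, Finset.mul_sum, Finset.mul_sum, Finset.mul_sum,
              ← Finset.sum_add_distrib]
            apply Finset.sum_congr rfl
            intro x' _
            ring

lemma isClosed_Sset (n ℓ m : ℕ) : IsClosed (Sset n ℓ m) := by
  have c1 : ∀ (y : Fin ℓ) (w : Fin (m+1)), Continuous
      (fun p : (Fin ℓ → Fin (m+1) → ℝ) × (Fin ℓ → Fin (m+1) → Fin n → Fin n → ℝ) =>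
        p.1 y w) := fun y w =>
    (continuous_apply w).comp ((continuous_apply y).comp continuous_fst)
  have c2 : ∀ (y : Fin ℓ) (w : Fin (m+1)) (i j : Fin n), Continuous
      (fun p : (Fin ℓ → Fin (m+1) → ℝ) × (Fin ℓ → Fin (m+1) → Fin n → Fin n → ℝ) =>
        p.2 y w i j) := fun y w i j =>
    (continuous_apply j).comp ((continuous_apply i).comp ((continuous_apply w).comp
      ((continuous_apply y).comp continuous_snd)))
  have h1 : IsClosed {p : (Fin ℓ → Fin (m+1) → ℝ) ×
      (Fin ℓ → Fin (m+1) → Fin n → Fin n → ℝ) | ∀ y w, 0 ≤ p.1 y w} := by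
    have : {p : (Fin ℓ → Fin (m+1) → ℝ) × (Fin ℓ → Fin (m+1) → Fin n → Fin n → ℝ) |
        ∀ y w, 0 ≤ p.1 y w} = ⋂ y, ⋂ w, {p | 0 ≤ p.1 y w} := by
      ext p; simp [Set.mem_iInter]
    rw [this]
    exact isClosed_iInter fun y => isClosed_iInter fun w =>
      isClosed_le continuous_const (c1 y w)
  have h2 : IsClosed {p : (Fin ℓ → Fin (m+1) → ℝ) ×
      (Fin ℓ → Fin (m+1) → Fin n → Fin n → ℝ) | ∀ y, ∑ w, p.1 y w = 1} := by
    have : {p : (Fin ℓ → Fin (m+1) → ℝ) × (Fin ℓ → Fin (m+1) → Fin n → Fin n → ℝ) |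
        ∀ y, ∑ w, p.1 y w = 1} = ⋂ y, {p | ∑ w, p.1 y w = 1} := by
      ext p; simp [Set.mem_iInter]
    rw [this]
    exact isClosed_iInter fun y =>
      isClosed_eq (continuous_finset_sum _ fun w _ => c1 y w) continuous_const
  have h3 : IsClosed {p : (Fin ℓ → Fin (m+1) → ℝ) ×
      (Fin ℓ → Fin (m+1) → Fin n → Fin n → ℝ) | ∀ y w i j, 0 ≤ p.2 y w i j} := by
    have : {p : (Fin ℓ → Fin (m+1) → ℝ) × (Fin ℓ → Fin (m+1) → Fin n → Fin n → ℝ) |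
        ∀ y w i j, 0 ≤ p.2 y w i j} = ⋂ y, ⋂ w, ⋂ i, ⋂ j, {p | 0 ≤ p.2 y w i j} := by
      ext p; simp [Set.mem_iInter]
    rw [this]
    exact isClosed_iInter fun y => isClosed_iInter fun w => isClosed_iInter fun i =>
      isClosed_iInter fun j => isClosed_le continuous_const (c2 y w i j)
  have h4 : IsClosed {p : (Fin ℓ → Fin (m+1) → ℝ) ×
      (Fin ℓ → Fin (m+1) → Fin n → Fin n → ℝ) | ∀ y w i, ∑ j, p.2 y w i j = 1} := by
    have : {p : (Fin ℓ → Fin (m+1) → ℝ) × (Fin ℓ → Fin (m+1) → Fin n → Fin n → ℝ) |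
        ∀ y w i, ∑ j, p.2 y w i j = 1} = ⋂ y, ⋂ w, ⋂ i, {p | ∑ j, p.2 y w i j = 1} := by
      ext p; simp [Set.mem_iInter]
    rw [this]
    exact isClosed_iInter fun y => isClosed_iInter fun w => isClosed_iInter fun i =>
      isClosed_eq (continuous_finset_sum _ fun j _ => c2 y w i j) continuous_const
  have h5 : IsClosed {p : (Fin ℓ → Fin (m+1) → ℝ) ×
      (Fin ℓ → Fin (m+1) → Fin n → Fin n → ℝ) | ∀ y w j, ∑ i, p.2 y w i j = 1} := by
    have : {p : (Fin ℓ → Fin (m+1) → ℝ) × (Fin ℓ → Fin (m+1) → Fin n → Fin n → ℝ) |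
        ∀ y w j, ∑ i, p.2 y w i j = 1} = ⋂ y, ⋂ w, ⋂ j, {p | ∑ i, p.2 y w i j = 1} := by
      ext p; simp [Set.mem_iInter]
    rw [this]
    exact isClosed_iInter fun y => isClosed_iInter fun w => isClosed_iInter fun j =>
      isClosed_eq (continuous_finset_sum _ fun i _ => c2 y w i j) continuous_const
  have : Sset n ℓ m = {p | ∀ y w, 0 ≤ p.1 y w} ∩ ({p | ∀ y, ∑ w, p.1 y w = 1} ∩
      ({p | ∀ y w i j, 0 ≤ p.2 y w i j} ∩ ({p | ∀ y w i, ∑ j, p.2 y w i j = 1} ∩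
        {p | ∀ y w j, ∑ i, p.2 y w i j = 1}))) := by
    ext p
    constructor
    · rintro ⟨a1, a2, a3⟩
      exact ⟨a1, a2, fun y w i j => (a3 y w).1 i j, fun y w i => (a3 y w).2.1 i,
        fun y w j => (a3 y w).2.2 j⟩
    · rintro ⟨a1, a2, a3, a4, a5⟩
      exact ⟨a1, a2, fun y w => ⟨a3 y w, a4 y w, a5 y w⟩⟩
  rw [this]
  exact h1.inter (h2.inter (h3.inter (h4.inter h5)))

lemma isCompact_Kset {n ℓ m : ℕ} (P : Matrix (Fin n) (Fin ℓ) ℝ) :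
    IsCompact (Kset m P) := by
  have hbox1 : IsCompact (Set.pi Set.univ fun _ : Fin ℓ =>
      Set.pi Set.univ fun _ : Fin (m+1) => Set.Icc (0:ℝ) 1) :=
    isCompact_univ_pi fun _ => isCompact_univ_pi fun _ => isCompact_Icc
  have hbox2 : IsCompact (Set.pi Set.univ fun _ : Fin ℓ =>
      Set.pi Set.univ fun _ : Fin (m+1) => Set.pi Set.univ fun _ : Fin n =>
        Set.pi Set.univ fun _ : Fin n => Set.Icc (0:ℝ) 1) :=
    isCompact_univ_pi fun _ => isCompact_univ_pi fun _ => isCompact_univ_pi fun _ =>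
      isCompact_univ_pi fun _ => isCompact_Icc
  have hsub : Sset n ℓ m ⊆ (Set.pi Set.univ fun _ : Fin ℓ =>
      Set.pi Set.univ fun _ : Fin (m+1) => Set.Icc (0:ℝ) 1) ×ˢ
      (Set.pi Set.univ fun _ : Fin ℓ => Set.pi Set.univ fun _ : Fin (m+1) =>
        Set.pi Set.univ fun _ : Fin n => Set.pi Set.univ fun _ : Fin n =>
          Set.Icc (0:ℝ) 1) := by
    rintro p ⟨a1, a2, a3⟩
    constructor
    · intro y _ 
      intro w _
      refine ⟨a1 y w, ?_⟩
      rw [← a2 y]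
      exact Finset.single_le_sum (fun w (_ : w ∈ Finset.univ) => a1 y w) (Finset.mem_univ w)
    · intro y _
      intro w _
      intro i _
      intro j _
      refine ⟨(a3 y w).1 i j, ?_⟩
      rw [← (a3 y w).2.1 i]
      exact Finset.single_le_sum (fun j (_ : j ∈ Finset.univ) => (a3 y w).1 i j)
        (Finset.mem_univ j)
  have hS : IsCompact (Sset n ℓ m) :=
    (hbox1.prod hbox2).of_isClosed_subset (isClosed_Sset n ℓ m) hsub
  have hcont : Continuous (psiK (m := m) P) := by
    apply continuous_pi
    intro x
    apply continuous_pi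
    intro w
    apply continuous_finset_sum
    intro y _
    apply Continuous.mul
    · exact (continuous_apply w).comp ((continuous_apply y).comp continuous_fst)
    · apply continuous_finset_sum
      intro x' _
      apply Continuous.mul
      · exact (continuous_apply x').comp ((continuous_apply x).comp ((continuous_apply w).comp
          ((continuous_apply y).comp continuous_snd)))
      · exact continuous_const
  exact hS.image hcont

lemma backward_dir {n ℓ m : ℕ} {P : Matrix (Fin n) (Fin ℓ) ℝ}
    {Q : Matrix (Fin n) (Fin (m + 1)) ℝ}
    (hP : JointProb P) (hQ : JointProb Q)
    (hyp : ∀ A : Matrix (Fin n) (Fin (m + 1)) ℝ, (∀ x w, 0 ≤ A x w) →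
        ∑ w, ColSum Q w * PhiA A (fun x => Q x w / ColSum Q w) ≤
          ∑ y, ColSum P y * PhiA A (fun x => P x y / ColSum P y)) :
    CondMaj P Q := by
  classical
  have hn : n ≠ 0 := by
    rintro rfl
    have := hQ.2
    simp at this
  haveI : NeZero n := ⟨hn⟩
  by_contra hC
  have hQK : (fun x w => Q x w) ∉ Kset m P := by
    intro hmem
    exact hC (condmaj_of_rep ((repK_iff_mem P _).2 hmem))
  obtain ⟨f, u, hfK, hfQ⟩ := geometric_hahn_banach_closed_point
    (convex_Kset P) (isCompact_Kset P).isClosed hQK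
  set δ : Fin n → Fin (m+1) → (Fin n → Fin (m+1) → ℝ) := fun x w =>
    fun x' w' => (if x = x' then (1:ℝ) else 0) * (if w = w' then 1 else 0) with hδ
  set B : Matrix (Fin n) (Fin (m+1)) ℝ := fun x w => f (δ x w) with hB
  have hdecomp : ∀ M : Fin n → Fin (m+1) → ℝ, M = ∑ x, ∑ w, M x w • δ x w := by
    intro M
    funext x' w'
    rw [Finset.sum_apply, Finset.sum_apply]
    have : ∀ x : Fin n, (∑ w, M x w • δ x w) x' w'
        = ∑ w, M x w * ((if x = x' then (1:ℝ) else 0) * (if w = w' then 1 else 0)) := by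
      intro x
      rw [Finset.sum_apply, Finset.sum_apply]
      rfl
    rw [Finset.sum_congr rfl fun x _ => this x]
    simp [mul_ite, ite_mul, Finset.sum_ite_eq, Finset.sum_ite_eq']
  have hf_eq : ∀ M : Fin n → Fin (m+1) → ℝ, f M = ∑ x, ∑ w, M x w * B x w := by
    intro M
    conv_lhs => rw [hdecomp M]
    rw [map_sum]
    apply Finset.sum_congr rfl
    intro x _
    rw [map_sum]
    apply Finset.sum_congr rfl
    intro w _
    rw [f.map_smul, smul_eq_mul]
  -- construct the maximizer in Kset
  choose wy σy hwy using fun y => phiP_exists B (fun x => P x y)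
  set sS : Fin ℓ → Fin (m+1) → ℝ := fun y w => if w = wy y then 1 else 0 with hsS
  set ES : Fin ℓ → Fin (m+1) → Fin n → Fin n → ℝ :=
    fun y _ i j => if j = σy y i then 1 else 0 with hES
  have hmemS : (sS, ES) ∈ Sset n ℓ m := by
    refine ⟨fun y w => ?_, fun y => by simp [hsS], fun y w =>
      ⟨fun i j => ?_, fun i => by simp [hES], fun j => ?_⟩⟩
    · show (0:ℝ) ≤ if w = wy y then 1 else 0
      split <;> norm_num
    · show (0:ℝ) ≤ if j = σy y i then 1 else 0
      split <;> norm_num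
    · show ∑ i, (if j = σy y i then (1:ℝ) else 0) = 1
      rw [← Equiv.sum_comp (σy y).symm (fun i => if j = σy y i then (1:ℝ) else 0)]
      simp
  have hXstar : psiK P (sS, ES) ∈ Kset m P := Set.mem_image_of_mem _ hmemS
  have hpsi : ∀ x w, psiK P (sS, ES) x w
      = ∑ y, (if w = wy y then (1:ℝ) else 0) * P (σy y x) y := by
    intro x w
    unfold psiK
    apply Finset.sum_congr rfl
    intro y _
    have h1 : ∑ x', ES y w x x' * P x' y = P (σy y x) y := by
      simp [hES, ite_mul]
    rw [h1]
  have hfXstar : f (psiK P (sS, ES)) = ∑ y, phiP B (fun x => P x y) := by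
    rw [hf_eq]
    calc ∑ x, ∑ w, psiK P (sS, ES) x w * B x w
        = ∑ x, ∑ y, ∑ w, (if w = wy y then (1:ℝ) else 0) * (P (σy y x) y * B x w) := by
          apply Finset.sum_congr rfl
          intro x _
          calc ∑ w, psiK P (sS, ES) x w * B x w
              = ∑ w, ∑ y, (if w = wy y then (1:ℝ) else 0) * (P (σy y x) y * B x w) := by
                apply Finset.sum_congr rfl
                intro w _
                rw [hpsi x w, Finset.sum_mul]
                apply Finset.sum_congr rfl
                intro y _
                ring
            _ = ∑ y, ∑ w, (if w = wy y then (1:ℝ) else 0) * (P (σy y x) y * B x w) :=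
                Finset.sum_comm
      _ = ∑ y, ∑ x, B x (wy y) * P (σy y x) y := by
          rw [Finset.sum_comm]
          apply Finset.sum_congr rfl
          intro y _
          apply Finset.sum_congr rfl
          intro x _
          simp only [ite_mul, one_mul, zero_mul, Finset.sum_ite_eq', Finset.mem_univ, if_true]
          ring
      _ = ∑ y, phiP B (fun x => P x y) := by
          apply Finset.sum_congr rfl
          intro y _
          exact (hwy y).symm
  have hPcolB : ∀ y, ColSum P y * PhiA B (fun x => P x y / ColSum P y)
      = phiP B (fun x => P x y) := fun y => phiP_col B _ (fun x => hP.1 x y)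
  have hQcolB : ∀ w, ColSum Q w * PhiA B (fun x => Q x w / ColSum Q w)
      = phiP B (fun x => Q x w) := fun w => phiP_col B _ (fun x => hQ.1 x w)
  have hPside : ∑ y, ColSum P y * PhiA B (fun x => P x y / ColSum P y) < u := by
    rw [Finset.sum_congr rfl (fun y _ => hPcolB y), ← hfXstar]
    exact hfK _ hXstar
  have hQside : u < ∑ w, ColSum Q w * PhiA B (fun x => Q x w / ColSum Q w) := by
    rw [Finset.sum_congr rfl (fun w _ => hQcolB w)]
    refine lt_of_lt_of_le hfQ ?_
    have hfq2 : f (fun x w => Q x w) = ∑ x, ∑ w, Q x w * B x w := hf_eq _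
    rw [hfq2, Finset.sum_comm]
    apply Finset.sum_le_sum
    intro w _
    have h1 := le_phiP B (fun x => Q x w) w 1
    refine le_trans (le_of_eq ?_) h1
    apply Finset.sum_congr rfl
    intro x _
    show Q x w * B x w = B x w * Q x w
    ring
  set c : ℝ := Finset.univ.sup' Finset.univ_nonempty
    (fun p : Fin n × Fin (m+1) => |B p.1 p.2|) with hc
  have hcB : ∀ x w, |B x w| ≤ c := fun x w =>
    Finset.le_sup' (f := fun p : Fin n × Fin (m+1) => |B p.1 p.2|) (Finset.mem_univ (x, w))
  have hA0 : ∀ x w, 0 ≤ B x w + c := by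
    intro x w
    have h2 := abs_le.1 (hcB x w)
    linarith [h2.1]
  have hQtot : ∑ w, ColSum Q w = 1 := by
    rw [← hQ.2]
    exact Finset.sum_comm
  have hPtot : ∑ y, ColSum P y = 1 := by
    rw [← hP.2]
    exact Finset.sum_comm
  have hshiftQ : ∑ w, ColSum Q w * PhiA (fun x w => B x w + c) (fun x => Q x w / ColSum Q w)
      = (∑ w, ColSum Q w * PhiA B (fun x => Q x w / ColSum Q w)) + c := by
    have per : ∀ w, ColSum Q w * PhiA (fun x w => B x w + c) (fun x => Q x w / ColSum Q w)
        = ColSum Q w * PhiA B (fun x => Q x w / ColSum Q w) + c * ColSum Q w := by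
      intro w
      have e1 : ColSum Q w * PhiA (fun x w => B x w + c) (fun x => Q x w / ColSum Q w)
          = phiP (fun x w => B x w + c) (fun x => Q x w) :=
        phiP_col (fun x w => B x w + c) _ (fun x => hQ.1 x w)
      rw [e1, phiP_shift B (fun x => Q x w) c, hQcolB w]
      rfl
    rw [Finset.sum_congr rfl (fun w _ => per w), Finset.sum_add_distrib, ← Finset.mul_sum,
      hQtot, mul_one]
  have hshiftP : ∑ y, ColSum P y * PhiA (fun x w => B x w + c) (fun x => P x y / ColSum P y)
      = (∑ y, ColSum P y * PhiA B (fun x => P x y / ColSum P y)) + c := by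
    have per : ∀ y, ColSum P y * PhiA (fun x w => B x w + c) (fun x => P x y / ColSum P y)
        = ColSum P y * PhiA B (fun x => P x y / ColSum P y) + c * ColSum P y := by
      intro y
      have e1 : ColSum P y * PhiA (fun x w => B x w + c) (fun x => P x y / ColSum P y)
          = phiP (fun x w => B x w + c) (fun x => P x y) :=
        phiP_col (fun x w => B x w + c) _ (fun x => hP.1 x y)
      rw [e1, phiP_shift B (fun x => P x y) c, hPcolB y]
      rfl
    rw [Finset.sum_congr rfl (fun y _ => per y), Finset.sum_add_distrib, ← Finset.mul_sum,
      hPtot, mul_one]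
  have hineq := hyp (fun x w => B x w + c) hA0
  rw [hshiftQ, hshiftP] at hineq
  linarith

theorem stmt7 {n ℓ m : ℕ} (P : Matrix (Fin n) (Fin ℓ) ℝ)
    (Q : Matrix (Fin n) (Fin (m + 1)) ℝ)
    (hP : JointProb P) (hQ : JointProb Q) :
    CondMaj P Q ↔
      ∀ A : Matrix (Fin n) (Fin (m + 1)) ℝ, (∀ x w, 0 ≤ A x w) →
        ∑ w, ColSum Q w * PhiA A (fun x => Q x w / ColSum Q w) ≤
          ∑ y, ColSum P y * PhiA A (fun x => P x y / ColSum P y) := by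
  constructor
  · intro h A _
    exact forward_ineq hP hQ (repK_of_condmaj h) A
  · intro hyp
    exact backward_dir hP hQ hyp
end
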